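/- arXiv:1909.05244 — 4 statements merged into one kernel-verified Lean document; each statement's English description precedes it below -/
import Mathlib

section
/- Suppose A ∈ ℝ^{k×J} is a matrix with A · 𝔼[γ₀(1,X) − γ₀(0,X)] = 0 (the moment condition holds at the true regression). Then for every measurable γ : {0,1} × 𝒳 → ℝ^J with 𝔼[|γ(Z,X)|²] < ∞, the doubly robust moment function has mean zero when evaluated at the true balancing weight: 𝔼[ A·(γ(1,X) − γ(0,X)) + α₀(Z,X)·A·(V − γ(Z,X)) ] = 0 (as a vector in ℝ^k). -/
open MeasureTheory ProbabilityTheory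

section Aux

variable {Ω : Type*} {mΩ : MeasurableSpace Ω} {μ : Measure Ω} {J : ℕ}

lemma integrable_coord {F : Ω → Fin J → ℝ} (hF : Integrable F μ) (j : Fin J) :
    Integrable (fun ω => F ω j) μ :=
  (ContinuousLinearMap.proj (R := ℝ) (φ := fun _ : Fin J => ℝ) j).integrable_comp hF

lemma integral_coord {F : Ω → Fin J → ℝ} (hF : Integrable F μ) (j : Fin J) :
    (∫ ω, F ω ∂μ) j = ∫ ω, F ω j ∂μ :=
  ((ContinuousLinearMap.proj (R := ℝ) (φ := fun _ : Fin J => ℝ) j).integral_comp_comm hF).symm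

lemma integrable_of_coords {F : Ω → Fin J → ℝ} (hFm : AEStronglyMeasurable F μ)
    (h : ∀ j, Integrable (fun ω => F ω j) μ) : Integrable F μ := by
  refine Integrable.mono' (g := fun ω => ∑ j, |F ω j|)
    (integrable_finset_sum _ fun j _ => (h j).abs) hFm (ae_of_all _ fun ω => ?_)
  rw [pi_norm_le_iff_of_nonneg (Finset.sum_nonneg fun j _ => abs_nonneg _)]
  intro i
  exact Finset.single_le_sum (f := fun j => |F ω j|) (fun j _ => abs_nonneg _) (Finset.mem_univ i)

lemma integrable_of_sq [IsFiniteMeasure μ] {E : Type*}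
    [NormedAddCommGroup E] {f : Ω → E} (hm : AEStronglyMeasurable f μ)
    (h2 : Integrable (fun ω => ‖f ω‖ ^ 2) μ) : Integrable f μ := by
  refine Integrable.mono' ((integrable_const (1:ℝ)).add h2) hm (ae_of_all _ fun ω => ?_)
  have := norm_nonneg (f ω)
  simp only [Pi.add_apply]
  nlinarith [sq_nonneg (‖f ω‖ - 1)]

lemma condexp_coord {Ω : Type*} {m mΩ : MeasurableSpace Ω} {μ : Measure Ω} {J : ℕ}
    [IsFiniteMeasure μ] (hm : m ≤ mΩ)
    {f : Ω → Fin J → ℝ} (hf : Integrable f μ) (j : Fin J) :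
    (fun ω => (μ[f|m]) ω j) =ᵐ[μ] μ[fun ω => f ω j|m] := by
  refine ae_eq_condExp_of_forall_setIntegral_eq hm (integrable_coord hf j)
    (fun s _ _ => (integrable_coord integrable_condExp j).integrableOn)
    (fun s hs hμs => ?_) ?_
  · rw [← integral_coord integrable_condExp.integrableOn j,
      ← integral_coord hf.integrableOn j, setIntegral_condExp hm hf hs]
  · exact StronglyMeasurable.aestronglyMeasurable ((continuous_apply j).comp_stronglyMeasurable
      (stronglyMeasurable_condExp (f := f) (m := m) (μ := μ)))

end Aux

lemma key_pullout {Ω : Type*} {m mΩ : MeasurableSpace Ω} {μ : Measure Ω}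
    [IsFiniteMeasure μ] (hm : m ≤ mΩ)
    {f W g : Ω → ℝ} (hf : StronglyMeasurable[m] f) (hW : Integrable W μ)
    (hfW : Integrable (fun ω => f ω * W ω) μ)
    (hg : (fun ω => f ω * (μ[W|m]) ω) =ᵐ[μ] g) :
    Integrable g μ ∧ ∫ ω, f ω * W ω ∂μ = ∫ ω, g ω ∂μ := by
  have h := condExp_mul_of_stronglyMeasurable_left hf hfW hW
  have hge : g =ᵐ[μ] μ[fun ω => f ω * W ω|m] := (hg.symm.trans h.symm)
  exact ⟨integrable_condExp.congr hge.symm,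
    by rw [integral_congr_ae hge, integral_condExp hm]⟩

lemma vec_pullout {Ω : Type*} {m mΩ : MeasurableSpace Ω} {μ : Measure Ω}
    [IsProbabilityMeasure μ] (hm : m ≤ mΩ) {J : ℕ}
    {W p : Ω → ℝ} (hW : Integrable W μ) (hp : Measurable[m] p)
    (hcond : (fun ω => (μ[W|m]) ω) =ᵐ[μ] p)
    {c : ℝ} (hc0 : 0 < c) (hpc : ∀ᵐ ω ∂μ, c ≤ p ω)
    {G : Ω → Fin J → ℝ} (hG : Measurable[m] G)
    (hint : Integrable (fun ω => (W ω / p ω) • G ω) μ) :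
    Integrable G μ ∧ ∫ ω, (W ω / p ω) • G ω ∂μ = ∫ ω, G ω ∂μ := by
  have hkey : ∀ j : Fin J, Integrable (fun ω => G ω j) μ ∧
      ∫ ω, (W ω / p ω) * G ω j ∂μ = ∫ ω, G ω j ∂μ := by
    intro j
    have hfj : StronglyMeasurable[m] (fun ω => G ω j / p ω) :=
      (((measurable_pi_apply j).comp hG).div hp).stronglyMeasurable
    have hfWj : Integrable (fun ω => (G ω j / p ω) * W ω) μ := by
      refine (integrable_coord hint j).congr (ae_of_all _ fun ω => ?_)
      simp only [Pi.smul_apply, smul_eq_mul, div_eq_mul_inv]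
      ring
    have := key_pullout hm hfj hW hfWj (g := fun ω => G ω j) ?_
    · refine ⟨this.1, ?_⟩
      rw [← this.2]
      refine integral_congr_ae (ae_of_all _ fun ω => ?_)
      simp only [div_eq_mul_inv]; ring
    · filter_upwards [hcond, hpc] with ω h1 h2
      rw [h1]
      exact div_mul_cancel₀ _ (by linarith)
  have hGint : Integrable G μ :=
    integrable_of_coords (hG.mono hm le_rfl).aestronglyMeasurable (fun j => (hkey j).1)
  refine ⟨hGint, funext fun j => ?_⟩
  rw [integral_coord hint j, integral_coord hGint j]
  simpa using (hkey j).2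

/-- If the moment condition `A·𝔼[γ₀(1,X) − γ₀(0,X)] = 0` holds at the true regression `γ₀`,
then for every measurable square-integrable `γ` the doubly robust moment function has mean
zero when evaluated at the true balancing weight `α₀`:
`𝔼[A(γ(1,X) − γ(0,X)) + α₀(Z,X)·A(V − γ(Z,X))] = 0`. -/
theorem doubly_robust_moment_zero_at_true_balancing_weight
    {Ω 𝒳 : Type*} [MeasureSpace Ω] [IsProbabilityMeasure (ℙ : Measure Ω)]
    [MeasurableSpace 𝒳] {J k : ℕ}
    (X : Ω → 𝒳) (hX : Measurable X)
    (Z : Ω → ℝ) (hZ : Measurable Z) (hZ01 : ∀ ω, Z ω = 0 ∨ Z ω = 1)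
    (π₀ : 𝒳 → ℝ) (hπ : Measurable π₀)
    (hcond : ∀ᵐ ω ∂ℙ, (ℙ[Z | MeasurableSpace.comap X inferInstance]) ω = π₀ (X ω))
    (c : ℝ) (hc0 : 0 < c) (hc2 : c ≤ 1/2)
    (hover : ∀ᵐ ω ∂ℙ, c ≤ π₀ (X ω) ∧ π₀ (X ω) ≤ 1 - c)
    (V : Ω → (Fin J → ℝ)) (hV : Measurable V)
    (hV2 : Integrable (fun ω => ‖V ω‖ ^ 2) ℙ)
    (γ₀ : ℝ → 𝒳 → (Fin J → ℝ)) (hγ₀ : Measurable (fun p : ℝ × 𝒳 => γ₀ p.1 p.2))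
    (hγ₀cond : ∀ᵐ ω ∂ℙ,
      (ℙ[V | MeasurableSpace.comap (fun ω' => (Z ω', X ω')) inferInstance]) ω
        = γ₀ (Z ω) (X ω))
    (A : Matrix (Fin k) (Fin J) ℝ)
    (hmoment : A.mulVec (∫ ω, (γ₀ 1 (X ω) - γ₀ 0 (X ω)) ∂ℙ) = 0)
    (γ : ℝ → 𝒳 → (Fin J → ℝ)) (hγ : Measurable (fun p : ℝ × 𝒳 => γ p.1 p.2))
    (hγ2 : Integrable (fun ω => ‖γ (Z ω) (X ω)‖ ^ 2) ℙ) :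
    ∫ ω, (A.mulVec (γ 1 (X ω) - γ 0 (X ω))
        + (Z ω / π₀ (X ω) - (1 - Z ω) / (1 - π₀ (X ω)))
          • A.mulVec (V ω - γ (Z ω) (X ω))) ∂ℙ = 0 := by
  -- notation
  have hmX := hX.comap_le
  have hmZX := (hZ.prodMk hX).comap_le
  set w : Ω → ℝ := fun ω => Z ω / π₀ (X ω) - (1 - Z ω) / (1 - π₀ (X ω)) with hw
  -- basic measurability
  have hXmX : Measurable[MeasurableSpace.comap X inferInstance] X :=
    Measurable.of_comap_le le_rfl
  have hZXmZX : Measurable[MeasurableSpace.comap (fun ω' => (Z ω', X ω')) inferInstance]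
      (fun ω => (Z ω, X ω)) := Measurable.of_comap_le le_rfl
  have hπX_mX : Measurable[MeasurableSpace.comap X inferInstance] (fun ω => π₀ (X ω)) :=
    hπ.comp hXmX
  have hπX1_mX : Measurable[MeasurableSpace.comap X inferInstance]
      (fun ω => 1 - π₀ (X ω)) := measurable_const.sub hπX_mX
  have hg1 : ∀ (g : ℝ → 𝒳 → Fin J → ℝ), Measurable (fun p : ℝ × 𝒳 => g p.1 p.2) →
      ∀ t : ℝ, Measurable (fun x => g t x) := fun g hg t =>
    hg.comp (measurable_const.prodMk measurable_id)
  have hγ1m := hg1 γ hγ 1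
  have hγ0m := hg1 γ hγ 0
  have hγ₀1m := hg1 γ₀ hγ₀ 1
  have hγ₀0m := hg1 γ₀ hγ₀ 0
  have hγZXm : Measurable (fun ω => γ (Z ω) (X ω)) := hγ.comp (hZ.prodMk hX)
  have hγ₀ZXm : Measurable (fun ω => γ₀ (Z ω) (X ω)) := hγ₀.comp (hZ.prodMk hX)
  have hwm : Measurable w := (hZ.div (hπ.comp hX)).sub
    ((measurable_const.sub hZ).div (measurable_const.sub (hπ.comp hX)))
  have hwmZX : Measurable[MeasurableSpace.comap (fun ω' => (Z ω', X ω')) inferInstance] w := by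
    have h : Measurable (fun p : ℝ × 𝒳 => p.1 / π₀ p.2 - (1 - p.1) / (1 - π₀ p.2)) :=
      (measurable_fst.div (hπ.comp measurable_snd)).sub
        ((measurable_const.sub measurable_fst).div (measurable_const.sub (hπ.comp measurable_snd)))
    exact h.comp hZXmZX
  -- basic integrability
  have hZint : Integrable Z ℙ := by
    refine Integrable.mono' (integrable_const (1:ℝ)) hZ.aestronglyMeasurable
      (ae_of_all _ fun ω => ?_)
    rcases hZ01 ω with h | h <;> rw [h] <;> norm_num
  have hVint : Integrable V ℙ := integrable_of_sq hV.aestronglyMeasurable hV2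
  have hγZXint : Integrable (fun ω => γ (Z ω) (X ω)) ℙ :=
    integrable_of_sq hγZXm.aestronglyMeasurable hγ2
  have hγ₀ZXint : Integrable (fun ω => γ₀ (Z ω) (X ω)) ℙ :=
    Integrable.congr integrable_condExp hγ₀cond
  -- bound on w
  have hwbd : ∀ᵐ ω ∂ℙ, |w ω| ≤ c⁻¹ := by
    filter_upwards [hover] with ω hov
    rcases hZ01 ω with h | h
    · have e : w ω = -(1 / (1 - π₀ (X ω))) := by rw [hw]; simp only; rw [h]; ring
      rw [e, abs_neg, abs_of_nonneg (one_div_nonneg.mpr (by linarith [hov.2])), inv_eq_one_div]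
      exact one_div_le_one_div_of_le hc0 (by linarith [hov.2])
    · have e : w ω = 1 / π₀ (X ω) := by rw [hw]; simp only; rw [h]; ring
      have hp0 : 0 < π₀ (X ω) := lt_of_lt_of_le hc0 hov.1
      rw [e, abs_of_nonneg (one_div_nonneg.mpr hp0.le), inv_eq_one_div]
      exact one_div_le_one_div_of_le hc0 hov.1
  have hsmul_int : ∀ (F : Ω → Fin J → ℝ), Measurable F → Integrable F ℙ →
      Integrable (fun ω => w ω • F ω) ℙ := by
    intro F hFm hFint
    refine Integrable.mono' (hFint.norm.const_mul c⁻¹) (hwm.smul hFm).aestronglyMeasurable ?_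
    filter_upwards [hwbd] with ω h
    rw [norm_smul]
    exact mul_le_mul_of_nonneg_right h (norm_nonneg _)
  have hwVint := hsmul_int V hV hVint
  have hwγint := hsmul_int _ hγZXm hγZXint
  have hwγ₀int := hsmul_int _ hγ₀ZXm hγ₀ZXint
  -- Step 1: ∫ w • V = ∫ w • γ₀(Z,X)
  have step1 : ∫ ω, w ω • V ω ∂ℙ = ∫ ω, w ω • γ₀ (Z ω) (X ω) ∂ℙ := by
    have hcoord : ∀ j, ∫ ω, w ω * V ω j ∂ℙ = ∫ ω, w ω * γ₀ (Z ω) (X ω) j ∂ℙ := by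
      intro j
      have hVj : Integrable (fun ω => V ω j) ℙ := integrable_coord hVint j
      have hwVj : Integrable (fun ω => w ω * V ω j) ℙ :=
        (integrable_coord hwVint j).congr (ae_of_all _ fun ω => rfl)
      have h1 := condExp_mul_of_stronglyMeasurable_left hwmZX.stronglyMeasurable
        (hwVj.congr (ae_of_all _ fun ω => rfl)) hVj
      have h2 : (ℙ[fun ω => V ω j|MeasurableSpace.comap (fun ω' => (Z ω', X ω'))
          inferInstance]) =ᵐ[ℙ] fun ω => γ₀ (Z ω) (X ω) j := by
        refine (condexp_coord hmZX hVint j).symm.trans ?_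
        filter_upwards [hγ₀cond] with ω h
        rw [h]
      calc ∫ ω, w ω * V ω j ∂ℙ
          = ∫ ω, (ℙ[w * fun ω => V ω j|MeasurableSpace.comap (fun ω' => (Z ω', X ω'))
              inferInstance]) ω ∂ℙ := (integral_condExp hmZX).symm
        _ = ∫ ω, w ω * γ₀ (Z ω) (X ω) j ∂ℙ := by
            refine integral_congr_ae (h1.trans ?_)
            filter_upwards [h2] with ω h
            simp only [Pi.mul_apply]
            rw [h]
    funext j
    rw [integral_coord hwVint j, integral_coord hwγ₀int j]
    calc ∫ ω, (w ω • V ω) j ∂ℙ = ∫ ω, w ω * V ω j ∂ℙ := rfl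
      _ = ∫ ω, w ω * γ₀ (Z ω) (X ω) j ∂ℙ := hcoord j
      _ = ∫ ω, (w ω • γ₀ (Z ω) (X ω)) j ∂ℙ := rfl
  -- integrability of the four weighted pieces
  have hZ1int : Integrable (fun ω => 1 - Z ω) ℙ := (integrable_const (1:ℝ)).sub hZint
  have hint1 : ∀ (g : ℝ → 𝒳 → Fin J → ℝ), Measurable (fun p : ℝ × 𝒳 => g p.1 p.2) →
      Integrable (fun ω => g (Z ω) (X ω)) ℙ →
      Integrable (fun ω => (Z ω / π₀ (X ω)) • g 1 (X ω)) ℙ := by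
    intro g hgm hgint
    refine Integrable.mono' (hgint.norm.const_mul c⁻¹)
      ((hZ.div (hπ.comp hX)).smul ((hg1 g hgm 1).comp hX)).aestronglyMeasurable ?_
    filter_upwards [hover] with ω hov
    rcases hZ01 ω with h | h
    · rw [h]
      simp only [zero_div, zero_smul, norm_zero]
      positivity
    · rw [h, norm_smul]
      have hp0 : 0 < π₀ (X ω) := lt_of_lt_of_le hc0 hov.1
      have hb : ‖(1:ℝ) / π₀ (X ω)‖ ≤ c⁻¹ := by
        rw [Real.norm_eq_abs, abs_of_nonneg (one_div_nonneg.mpr hp0.le), inv_eq_one_div]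
        exact one_div_le_one_div_of_le hc0 hov.1
      exact mul_le_mul_of_nonneg_right hb (norm_nonneg _)
  have hint0 : ∀ (g : ℝ → 𝒳 → Fin J → ℝ), Measurable (fun p : ℝ × 𝒳 => g p.1 p.2) →
      Integrable (fun ω => g (Z ω) (X ω)) ℙ →
      Integrable (fun ω => ((1 - Z ω) / (1 - π₀ (X ω))) • g 0 (X ω)) ℙ := by
    intro g hgm hgint
    refine Integrable.mono' (hgint.norm.const_mul c⁻¹)
      (((measurable_const.sub hZ).div (measurable_const.sub (hπ.comp hX))).smul
        ((hg1 g hgm 0).comp hX)).aestronglyMeasurable ?_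
    filter_upwards [hover] with ω hov
    rcases hZ01 ω with h | h
    · rw [h, norm_smul]
      have hp0 : 0 < 1 - π₀ (X ω) := by linarith [hov.2]
      have hb : ‖(1 - (0:ℝ)) / (1 - π₀ (X ω))‖ ≤ c⁻¹ := by
        rw [sub_zero, Real.norm_eq_abs, abs_of_nonneg (one_div_nonneg.mpr hp0.le),
          inv_eq_one_div]
        exact one_div_le_one_div_of_le hc0 (by linarith [hov.2])
      exact mul_le_mul_of_nonneg_right hb (norm_nonneg _)
    · rw [h]
      simp only [sub_self, zero_div, zero_smul, norm_zero]
      positivity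
  -- conditional expectation of 1 - Z
  have hcond1 : ∀ᵐ ω ∂ℙ, (ℙ[(fun ω => 1 - Z ω)|MeasurableSpace.comap X inferInstance]) ω
      = 1 - π₀ (X ω) := by
    have hsub := condExp_sub (μ := ℙ) (m := MeasurableSpace.comap X inferInstance)
      (integrable_const (1:ℝ)) hZint
    have hconst := condExp_const (μ := ℙ) hmX (1:ℝ)
    filter_upwards [hsub, hcond] with ω h1 h2
    have he : (ℙ[(fun ω => 1 - Z ω)|MeasurableSpace.comap X inferInstance]) ω
        = (ℙ[(fun _ : Ω => (1:ℝ)) - Z|MeasurableSpace.comap X inferInstance]) ω := rfl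
    rw [he, h1, Pi.sub_apply, congrFun hconst ω, h2]
  have hpc1 : ∀ᵐ ω ∂ℙ, c ≤ π₀ (X ω) := hover.mono fun ω h => h.1
  have hpc0 : ∀ᵐ ω ∂ℙ, c ≤ 1 - π₀ (X ω) := hover.mono fun ω h => by linarith [h.2]
  -- the four pull-out identities
  have H1 := vec_pullout (G := fun ω => γ₀ 1 (X ω)) hmX hZint hπX_mX hcond hc0 hpc1
    (hγ₀1m.comp hXmX) (hint1 γ₀ hγ₀ hγ₀ZXint)
  have H2 := vec_pullout (G := fun ω => γ₀ 0 (X ω)) hmX hZ1int hπX1_mX hcond1 hc0 hpc0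
    (hγ₀0m.comp hXmX) (hint0 γ₀ hγ₀ hγ₀ZXint)
  have H3 := vec_pullout (G := fun ω => γ 1 (X ω)) hmX hZint hπX_mX hcond hc0 hpc1
    (hγ1m.comp hXmX) (hint1 γ hγ hγZXint)
  have H4 := vec_pullout (G := fun ω => γ 0 (X ω)) hmX hZ1int hπX1_mX hcond1 hc0 hpc0
    (hγ0m.comp hXmX) (hint0 γ hγ hγZXint)
  -- pointwise decomposition of w • g(Z,X)
  have hdec : ∀ (g : ℝ → 𝒳 → Fin J → ℝ) ω, w ω • g (Z ω) (X ω)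
      = (Z ω / π₀ (X ω)) • g 1 (X ω) - ((1 - Z ω) / (1 - π₀ (X ω))) • g 0 (X ω) := by
    intro g ω
    rcases hZ01 ω with h | h <;> rw [hw] <;> simp only <;> rw [h] <;>
      norm_num [sub_smul, zero_div]
  -- values of the weighted integrals
  have hIγ₀ : ∫ ω, w ω • γ₀ (Z ω) (X ω) ∂ℙ
      = (∫ ω, γ₀ 1 (X ω) ∂ℙ) - ∫ ω, γ₀ 0 (X ω) ∂ℙ := by
    rw [integral_congr_ae (ae_of_all _ (hdec γ₀)),
      integral_sub (hint1 γ₀ hγ₀ hγ₀ZXint) (hint0 γ₀ hγ₀ hγ₀ZXint), H1.2, H2.2]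
  have hIγ : ∫ ω, w ω • γ (Z ω) (X ω) ∂ℙ
      = (∫ ω, γ 1 (X ω) ∂ℙ) - ∫ ω, γ 0 (X ω) ∂ℙ := by
    rw [integral_congr_ae (ae_of_all _ (hdec γ)),
      integral_sub (hint1 γ hγ hγZXint) (hint0 γ hγ hγZXint), H3.2, H4.2]
  -- assembling
  have hGint : Integrable
      (fun ω => (γ 1 (X ω) - γ 0 (X ω)) + w ω • (V ω - γ (Z ω) (X ω))) ℙ := by
    refine Integrable.congr ((H3.1.sub H4.1).add (hwVint.sub hwγint))
      (ae_of_all _ fun ω => ?_)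
    simp [smul_sub]
  have hGval : ∫ ω, ((γ 1 (X ω) - γ 0 (X ω)) + w ω • (V ω - γ (Z ω) (X ω))) ∂ℙ
      = ∫ ω, (γ₀ 1 (X ω) - γ₀ 0 (X ω)) ∂ℙ := by
    have e1 : ∫ ω, ((γ 1 (X ω) - γ 0 (X ω)) + w ω • (V ω - γ (Z ω) (X ω))) ∂ℙ
        = ∫ ω, ((γ 1 (X ω) - γ 0 (X ω)) + (w ω • V ω - w ω • γ (Z ω) (X ω))) ∂ℙ :=
      integral_congr_ae (ae_of_all _ fun ω => by simp only [smul_sub])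
    have hi34 : Integrable (fun ω => γ 1 (X ω) - γ 0 (X ω)) ℙ := H3.1.sub H4.1
    have hiw : Integrable (fun ω => w ω • V ω - w ω • γ (Z ω) (X ω)) ℙ :=
      hwVint.sub hwγint
    rw [e1, integral_add hi34 hiw, integral_sub H3.1 H4.1, integral_sub hwVint hwγint,
      step1, hIγ₀, hIγ, integral_sub H1.1 H2.1]
    abel
  -- conclude via the continuous linear map v ↦ A.mulVec v
  set L : (Fin J → ℝ) →L[ℝ] (Fin k → ℝ) :=
    LinearMap.toContinuousLinearMap (Matrix.mulVecLin A) with hL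
  have hLv : ∀ v, L v = A.mulVec v := fun v => rfl
  calc ∫ ω, (A.mulVec (γ 1 (X ω) - γ 0 (X ω))
        + (Z ω / π₀ (X ω) - (1 - Z ω) / (1 - π₀ (X ω)))
          • A.mulVec (V ω - γ (Z ω) (X ω))) ∂ℙ
      = ∫ ω, L ((γ 1 (X ω) - γ 0 (X ω)) + w ω • (V ω - γ (Z ω) (X ω))) ∂ℙ := by
        refine integral_congr_ae (ae_of_all _ fun ω => ?_)
        show A.mulVec (γ 1 (X ω) - γ 0 (X ω)) + w ω • A.mulVec (V ω - γ (Z ω) (X ω))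
          = L ((γ 1 (X ω) - γ 0 (X ω)) + w ω • (V ω - γ (Z ω) (X ω)))
        rw [L.map_add, L.map_smul, hLv, hLv]
    _ = L (∫ ω, ((γ 1 (X ω) - γ 0 (X ω)) + w ω • (V ω - γ (Z ω) (X ω))) ∂ℙ) :=
        L.integral_comp_comm hGint
    _ = 0 := by rw [hGval, hLv, hmoment]
end

section
/- Under the Identification assumption, for every bounded measurable function g : ℝ × 𝒳 → ℝ, the κ-weighted expectations identify complier counterfactual expectations: 𝔼[κ⁽⁰⁾(W) · g(Y,X)] = 𝔼[g(Y⁽⁰⁾, X) · 1{D⁽¹⁾ > D⁽⁰⁾}] and 𝔼[κ⁽¹⁾(W) · g(Y,X)] = 𝔼[g(Y⁽¹⁾, X) · 1{D⁽¹⁾ > D⁽⁰⁾}]. -/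
open MeasureTheory ProbabilityTheory
open scoped ENNReal NNReal

/-- Under conditional independence of `V` and `Z` given `σ(X)`, and `𝔼[Z|σ(X)] = π₀(X)`,
the `Z`-weighted expectation of any bounded `σ(X) ⊔ σ(V)`-measurable `U` equals the
`π₀(X)`-weighted expectation. -/
lemma key_weight {Ω 𝒳 E : Type*} [MeasureSpace Ω] [IsProbabilityMeasure (ℙ : Measure Ω)]
    [StandardBorelSpace Ω] [MeasurableSpace 𝒳] [MeasurableSpace E]
    (X : Ω → 𝒳) (hX : Measurable X)
    (Z : Ω → ℝ) (hZ : Measurable Z) (hZ01 : ∀ ω, Z ω = 0 ∨ Z ω = 1)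
    (π₀ : 𝒳 → ℝ) (hπ : Measurable π₀)
    (hcond : ∀ᵐ ω ∂ℙ, (ℙ[Z | MeasurableSpace.comap X inferInstance]) ω = π₀ (X ω))
    (hπb : ∀ᵐ ω ∂ℙ, 0 ≤ π₀ (X ω) ∧ π₀ (X ω) ≤ 1)
    (V : Ω → E) (hV : Measurable V)
    (hindep : CondIndepFun (MeasurableSpace.comap X inferInstance) hX.comap_le V Z ℙ)
    (U : Ω → ℝ)
    (hU : Measurable[MeasurableSpace.comap X inferInstance
      ⊔ MeasurableSpace.comap V inferInstance] U)
    (C : ℝ) (hbU : ∀ᵐ ω ∂ℙ, |U ω| ≤ C) :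
    ∫ ω, Z ω * U ω ∂ℙ = ∫ ω, π₀ (X ω) * U ω ∂ℙ := by
  have hmle : (MeasurableSpace.comap X inferInstance) ≤ (inferInstance : MeasurableSpace Ω) := hX.comap_le
  have hmVle : (MeasurableSpace.comap V inferInstance) ≤ (inferInstance : MeasurableSpace Ω) := hV.comap_le
  have hGle : (MeasurableSpace.comap X inferInstance ⊔ MeasurableSpace.comap V inferInstance) ≤ (inferInstance : MeasurableSpace Ω) := sup_le hmle hmVle
  have hint : ∀ f : Ω → ℝ, AEStronglyMeasurable f ℙ → ∀ c : ℝ,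
      (∀ᵐ ω ∂ℙ, |f ω| ≤ c) → Integrable f ℙ := by
    intro f hf c hb
    exact (memLp_top_of_bound hf c (hb.mono fun ω h => by
      simpa [Real.norm_eq_abs] using h)).integrable le_top
  have hZ0 : ∀ ω, 0 ≤ Z ω := fun ω => by rcases hZ01 ω with h | h <;> simp [h]
  have hZ1 : ∀ ω, Z ω ≤ 1 := fun ω => by rcases hZ01 ω with h | h <;> simp [h]
  have hZint : Integrable Z ℙ :=
    hint Z hZ.aestronglyMeasurable 1 (ae_of_all _ fun ω => abs_le.2 ⟨by linarith [hZ0 ω], hZ1 ω⟩)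
  have hπXint : Integrable (fun ω => π₀ (X ω)) ℙ :=
    hint _ (hπ.comp hX).aestronglyMeasurable 1
      (hπb.mono fun ω h => abs_le.2 ⟨by linarith [h.1], h.2⟩)
  -- set-integral equality on rectangles A ∩ B
  have hset : ∀ A B : Set Ω, MeasurableSet[(MeasurableSpace.comap X inferInstance)] A → MeasurableSet[(MeasurableSpace.comap V inferInstance)] B →
      ∫ ω in A ∩ B, Z ω ∂ℙ = ∫ ω in A ∩ B, π₀ (X ω) ∂ℙ := by
    intro A B hA hB
    have hB' : MeasurableSet B := hmVle _ hB
    obtain ⟨sB, hsB, rfl⟩ := hB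
    set T : Set Ω := Z ⁻¹' {1} with hT_def
    have hT' : MeasurableSet T := hZ (measurableSet_singleton 1)
    have hZind : Z = T.indicator (fun _ => (1 : ℝ)) := by
      funext ω
      rcases hZ01 ω with h | h
      · have : ω ∉ T := by simp [hT_def, Set.mem_preimage, h]
        simp [Set.indicator_of_notMem this, h]
      · have : ω ∈ T := by simp [hT_def, Set.mem_preimage, h]
        simp [Set.indicator_of_mem this, h]
    have hindep' := (condIndepFun_iff_condExp_inter_preimage_eq_mul hV hZ).mp hindep
      sB {1} hsB (measurableSet_singleton 1)
    have hcondT : (ℙ⟦T | (MeasurableSpace.comap X inferInstance)⟧) =ᵐ[ℙ] fun ω => π₀ (X ω) := by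
      have h1 : Set.indicator T (fun _ => (1 : ℝ)) = Z := hZind.symm
      rw [h1]
      exact hcond
    have h2 : (ℙ⟦V ⁻¹' sB ∩ T | (MeasurableSpace.comap X inferInstance)⟧) =ᵐ[ℙ] fun ω => (ℙ⟦V ⁻¹' sB | (MeasurableSpace.comap X inferInstance)⟧) ω * π₀ (X ω) := by
      filter_upwards [hindep', hcondT] with ω h1 h2
      rw [h1, h2]
    have hBT : MeasurableSet (V ⁻¹' sB ∩ T) := (hV hsB).inter hT'
    have hint1B : Integrable ((V ⁻¹' sB ∩ T).indicator fun _ => (1 : ℝ)) ℙ :=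
      (integrable_const 1).indicator hBT
    have hintB : Integrable ((V ⁻¹' sB).indicator fun _ => (1 : ℝ)) ℙ :=
      (integrable_const 1).indicator (hV hsB)
    have hπXm : Measurable[(MeasurableSpace.comap X inferInstance)] fun ω => π₀ (X ω) := fun s hs => ⟨π₀ ⁻¹' s, hπ hs, rfl⟩
    have hprod : Integrable ((fun ω => π₀ (X ω)) * (V ⁻¹' sB).indicator fun _ => (1 : ℝ)) ℙ := by
      refine hint _ (((hπ.comp hX).mul
        (measurable_one.indicator (hV hsB))).aestronglyMeasurable) 1 ?_
      filter_upwards [hπb] with ω h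
      show |π₀ (X ω) * (V ⁻¹' sB).indicator (fun _ => (1 : ℝ)) ω| ≤ 1
      by_cases hω : ω ∈ V ⁻¹' sB
      · rw [Set.indicator_of_mem hω, mul_one]
        exact abs_le.2 ⟨by linarith [h.1], h.2⟩
      · rw [Set.indicator_of_notMem hω, mul_zero, abs_zero]
        exact zero_le_one
    have hmul := condExp_mul_of_stronglyMeasurable_left (μ := ℙ) (m := MeasurableSpace.comap X inferInstance)
      hπXm.stronglyMeasurable hprod hintB
    have hA' : MeasurableSet A := hmle _ hA
    calc ∫ ω in A ∩ V ⁻¹' sB, Z ω ∂ℙ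
        = ∫ ω in A, ((V ⁻¹' sB ∩ T).indicator fun _ => (1 : ℝ)) ω ∂ℙ := by
          rw [hZind, setIntegral_indicator hT', setIntegral_indicator hBT, Set.inter_assoc]
      _ = ∫ ω in A, (ℙ⟦V ⁻¹' sB ∩ T | (MeasurableSpace.comap X inferInstance)⟧) ω ∂ℙ :=
          (setIntegral_condExp hmle hint1B hA).symm
      _ = ∫ ω in A, (ℙ⟦V ⁻¹' sB | (MeasurableSpace.comap X inferInstance)⟧) ω * π₀ (X ω) ∂ℙ :=
          setIntegral_congr_ae hA' (h2.mono fun ω h _ => h)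
      _ = ∫ ω in A, ((fun ω => π₀ (X ω)) * (ℙ⟦V ⁻¹' sB | (MeasurableSpace.comap X inferInstance)⟧)) ω ∂ℙ :=
          setIntegral_congr_fun hA' (fun ω _ => mul_comm _ _)
      _ = ∫ ω in A, (ℙ[(fun ω => π₀ (X ω)) * (V ⁻¹' sB).indicator (fun _ => (1 : ℝ)) | (MeasurableSpace.comap X inferInstance)]) ω ∂ℙ :=
          (setIntegral_congr_ae hA' (hmul.mono fun ω h _ => h)).symm
      _ = ∫ ω in A, ((fun ω => π₀ (X ω)) * (V ⁻¹' sB).indicator (fun _ => (1 : ℝ))) ω ∂ℙ :=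
          setIntegral_condExp hmle hprod hA
      _ = ∫ ω in A, ((V ⁻¹' sB).indicator fun ω => π₀ (X ω)) ω ∂ℙ := by
          refine setIntegral_congr_fun hA' (fun ω _ => ?_)
          by_cases hω : ω ∈ V ⁻¹' sB
          · simp [Set.indicator_of_mem hω]
          · simp [Set.indicator_of_notMem hω]
      _ = ∫ ω in A ∩ V ⁻¹' sB, π₀ (X ω) ∂ℙ := setIntegral_indicator (hV hsB)
  -- measure equality on (MeasurableSpace.comap X inferInstance ⊔ MeasurableSpace.comap V inferInstance)
  have hd₁m : Measurable fun ω => ENNReal.ofReal (Z ω) := ENNReal.measurable_ofReal.comp hZ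
  have hd₂m : Measurable fun ω => ENNReal.ofReal (π₀ (X ω)) :=
    ENNReal.measurable_ofReal.comp (hπ.comp hX)
  have hfin₁ : IsFiniteMeasure (Measure.withDensity ℙ fun ω => ENNReal.ofReal (Z ω)) := by
    refine isFiniteMeasure_withDensity (ne_of_lt ?_)
    calc ∫⁻ ω, ENNReal.ofReal (Z ω) ∂ℙ ≤ ∫⁻ _, 1 ∂ℙ :=
          lintegral_mono fun ω => ENNReal.ofReal_le_one.mpr (hZ1 ω)
      _ < ⊤ := by simp
  have hfin₂ : IsFiniteMeasure (Measure.withDensity ℙ fun ω => ENNReal.ofReal (π₀ (X ω))) := by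
    refine isFiniteMeasure_withDensity (ne_of_lt ?_)
    calc ∫⁻ ω, ENNReal.ofReal (π₀ (X ω)) ∂ℙ ≤ ∫⁻ _, 1 ∂ℙ := by
          exact lintegral_mono_ae (hπb.mono fun ω h => ENNReal.ofReal_le_one.mpr h.2)
      _ < ⊤ := by simp
  have hCrect : ∀ s : Set Ω, (∃ A B : Set Ω, MeasurableSet[(MeasurableSpace.comap X inferInstance)] A ∧ MeasurableSet[(MeasurableSpace.comap V inferInstance)] B ∧
      s = A ∩ B) → (Measure.withDensity ℙ fun ω => ENNReal.ofReal (Z ω)) s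
        = (Measure.withDensity ℙ fun ω => ENNReal.ofReal (π₀ (X ω))) s := by
    rintro s ⟨A, B, hA, hB, rfl⟩
    have hAB' : MeasurableSet (A ∩ B) := (hmle _ hA).inter (hmVle _ hB)
    rw [withDensity_apply _ hAB', withDensity_apply _ hAB',
      ← ofReal_integral_eq_lintegral_ofReal hZint.restrict
        (ae_restrict_of_ae (ae_of_all _ hZ0)),
      ← ofReal_integral_eq_lintegral_ofReal hπXint.restrict
        (ae_restrict_of_ae (hπb.mono fun ω h => h.1)),
      hset A B hA hB]
  have htrim : (Measure.withDensity ℙ fun ω => ENNReal.ofReal (Z ω)).trim hGle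
      = (Measure.withDensity ℙ fun ω => ENNReal.ofReal (π₀ (X ω))).trim hGle := by
    have hgen : (MeasurableSpace.comap X inferInstance ⊔ MeasurableSpace.comap V inferInstance) = MeasurableSpace.generateFrom
        {s : Set Ω | ∃ A B : Set Ω, MeasurableSet[(MeasurableSpace.comap X inferInstance)] A ∧ MeasurableSet[(MeasurableSpace.comap V inferInstance)] B ∧ s = A ∩ B} := by
      refine le_antisymm (sup_le ?_ ?_) (MeasurableSpace.generateFrom_le ?_)
      · intro s hs
        exact MeasurableSpace.measurableSet_generateFrom
          ⟨s, Set.univ, hs, MeasurableSet.univ, (Set.inter_univ s).symm⟩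
      · intro s hs
        exact MeasurableSpace.measurableSet_generateFrom
          ⟨Set.univ, s, MeasurableSet.univ, hs, (Set.univ_inter s).symm⟩
      · rintro s ⟨A, B, hA, hB, rfl⟩
        exact ((le_sup_left : (MeasurableSpace.comap X inferInstance) ≤ (MeasurableSpace.comap X inferInstance ⊔ MeasurableSpace.comap V inferInstance)) _ hA).inter ((le_sup_right : (MeasurableSpace.comap V inferInstance) ≤ (MeasurableSpace.comap X inferInstance ⊔ MeasurableSpace.comap V inferInstance)) _ hB)
    have hpi : IsPiSystem
        {s : Set Ω | ∃ A B : Set Ω, MeasurableSet[(MeasurableSpace.comap X inferInstance)] A ∧ MeasurableSet[(MeasurableSpace.comap V inferInstance)] B ∧ s = A ∩ B} := by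
      rintro s ⟨A1, B1, hA1, hB1, rfl⟩ t ⟨A2, B2, hA2, hB2, rfl⟩ -
      exact ⟨A1 ∩ A2, B1 ∩ B2, hA1.inter hA2, hB1.inter hB2, Set.inter_inter_inter_comm _ _ _ _⟩
    have huniv : (Measure.withDensity ℙ fun ω => ENNReal.ofReal (Z ω)).trim hGle Set.univ
        = (Measure.withDensity ℙ fun ω => ENNReal.ofReal (π₀ (X ω))).trim hGle Set.univ := by
      rw [trim_measurableSet_eq hGle MeasurableSet.univ,
        trim_measurableSet_eq hGle MeasurableSet.univ]
      exact hCrect _ ⟨Set.univ, Set.univ, MeasurableSet.univ, MeasurableSet.univ,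
        (Set.univ_inter _).symm⟩
    haveI : IsFiniteMeasure ((Measure.withDensity ℙ fun ω => ENNReal.ofReal (Z ω)).trim hGle) :=
      isFiniteMeasure_trim hGle
    refine ext_of_generate_finite
      (m0 := MeasurableSpace.comap X inferInstance ⊔ MeasurableSpace.comap V inferInstance)
      _ hgen hpi ?_ huniv
    rintro s hs
    have hsG : MeasurableSet[(MeasurableSpace.comap X inferInstance ⊔ MeasurableSpace.comap V inferInstance)] s := by
      rw [hgen]; exact MeasurableSpace.measurableSet_generateFrom hs
    rw [trim_measurableSet_eq hGle hsG, trim_measurableSet_eq hGle hsG]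
    exact hCrect s hs
  -- conclude
  have hUsm : StronglyMeasurable[(MeasurableSpace.comap X inferInstance ⊔ MeasurableSpace.comap V inferInstance)] U := hU.stronglyMeasurable
  have h₁ : ∫ ω, U ω ∂(Measure.withDensity ℙ fun ω => ENNReal.ofReal (Z ω)) = ∫ ω, Z ω * U ω ∂ℙ := by
    rw [show (fun ω => ENNReal.ofReal (Z ω))
        = (fun ω => ((Real.toNNReal (Z ω) : ℝ≥0) : ℝ≥0∞)) from rfl,
      integral_withDensity_eq_integral_smul hZ.real_toNNReal U]
    exact integral_congr_ae (ae_of_all _ fun ω => by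
      simp [NNReal.smul_def, Real.coe_toNNReal _ (hZ0 ω)])
  have h₂ : ∫ ω, U ω ∂(Measure.withDensity ℙ fun ω => ENNReal.ofReal (π₀ (X ω)))
      = ∫ ω, π₀ (X ω) * U ω ∂ℙ := by
    rw [show (fun ω => ENNReal.ofReal (π₀ (X ω)))
        = (fun ω => ((Real.toNNReal (π₀ (X ω)) : ℝ≥0) : ℝ≥0∞)) from rfl,
      integral_withDensity_eq_integral_smul (Measurable.real_toNNReal (f := fun ω => π₀ (X ω)) (hπ.comp hX)) U]
    exact integral_congr_ae (hπb.mono fun ω h => by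
      simp [NNReal.smul_def, Real.coe_toNNReal _ h.1])
  rw [← h₁, ← h₂, integral_trim hGle hUsm, integral_trim hGle hUsm, htrim]

/-- Under the IV identification assumption (conditional independence of potential outcomes
and the instrument given covariates, overlap, and monotonicity), for every bounded
measurable `g`, the κ-weighted expectations identify complier counterfactual expectations:
`𝔼[κ⁽⁰⁾(W)·g(Y,X)] = 𝔼[g(Y⁽⁰⁾,X)·1{D⁽¹⁾>D⁽⁰⁾}]` and
`𝔼[κ⁽¹⁾(W)·g(Y,X)] = 𝔼[g(Y⁽¹⁾,X)·1{D⁽¹⁾>D⁽⁰⁾}]`. -/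
theorem kappa_weighting_identifies_complier_expectations
    {Ω 𝒳 : Type*} [MeasureSpace Ω] [IsProbabilityMeasure (ℙ : Measure Ω)]
    [StandardBorelSpace Ω] [Nonempty Ω] [MeasurableSpace 𝒳]
    (X : Ω → 𝒳) (hX : Measurable X)
    (Z : Ω → ℝ) (hZ : Measurable Z) (hZ01 : ∀ ω, Z ω = 0 ∨ Z ω = 1)
    (π₀ : 𝒳 → ℝ) (hπ : Measurable π₀)
    (hcond : ∀ᵐ ω ∂ℙ, (ℙ[Z | MeasurableSpace.comap X inferInstance]) ω = π₀ (X ω))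
    (c : ℝ) (hc0 : 0 < c) (hc2 : c ≤ 1/2)
    (hover : ∀ᵐ ω ∂ℙ, c ≤ π₀ (X ω) ∧ π₀ (X ω) ≤ 1 - c)
    (Y0 Y1 : Ω → ℝ) (hY0 : Measurable Y0) (hY1 : Measurable Y1)
    (D0 D1 : Ω → ℝ) (hD0 : Measurable D0) (hD1 : Measurable D1)
    (hD001 : ∀ ω, D0 ω = 0 ∨ D0 ω = 1) (hD101 : ∀ ω, D1 ω = 0 ∨ D1 ω = 1)
    (hindep : CondIndepFun (MeasurableSpace.comap X inferInstance) hX.comap_le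
      (fun ω => (Y0 ω, Y1 ω, D0 ω, D1 ω)) Z ℙ)
    (hmono : ∀ᵐ ω ∂ℙ, D0 ω ≤ D1 ω)
    (hcompliers : 0 < ℙ {ω | D0 ω < D1 ω})
    (D : Ω → ℝ) (hD : ∀ ω, D ω = Z ω * D1 ω + (1 - Z ω) * D0 ω)
    (Y : Ω → ℝ) (hY : ∀ ω, Y ω = D ω * Y1 ω + (1 - D ω) * Y0 ω)
    (g : ℝ → 𝒳 → ℝ) (hg : Measurable (fun p : ℝ × 𝒳 => g p.1 p.2))
    (hgbdd : ∃ C, ∀ y x, |g y x| ≤ C) :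
    (∫ ω, (Z ω / π₀ (X ω) - (1 - Z ω) / (1 - π₀ (X ω))) * (D ω - 1) * g (Y ω) (X ω) ∂ℙ
      = ∫ ω, (if D0 ω < D1 ω then g (Y0 ω) (X ω) else 0) ∂ℙ) ∧
    (∫ ω, (Z ω / π₀ (X ω) - (1 - Z ω) / (1 - π₀ (X ω))) * D ω * g (Y ω) (X ω) ∂ℙ
      = ∫ ω, (if D0 ω < D1 ω then g (Y1 ω) (X ω) else 0) ∂ℙ) := by
  obtain ⟨Cg, hCg⟩ := hgbdd
  have hCg0 : 0 ≤ Cg := le_trans (abs_nonneg _) (hCg 0 (X (Classical.arbitrary Ω)))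
  have hπb : ∀ᵐ ω ∂ℙ, 0 ≤ π₀ (X ω) ∧ π₀ (X ω) ≤ 1 :=
    hover.mono fun ω h => ⟨le_trans hc0.le h.1, le_trans h.2 (by linarith)⟩
  set V : Ω → ℝ × ℝ × ℝ × ℝ := fun ω => (Y0 ω, Y1 ω, D0 ω, D1 ω) with hV_def
  have hV : Measurable V := (hY0.prodMk (hY1.prodMk (hD0.prodMk hD1)))
  have hmle : (MeasurableSpace.comap X inferInstance) ≤ (inferInstance : MeasurableSpace Ω) := hX.comap_le
  have hmVle : (MeasurableSpace.comap V inferInstance) ≤ (inferInstance : MeasurableSpace Ω) := hV.comap_le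
  have hGle : (MeasurableSpace.comap X inferInstance ⊔ MeasurableSpace.comap V inferInstance) ≤ (inferInstance : MeasurableSpace Ω) := sup_le hmle hmVle
  have hXG : Measurable[(MeasurableSpace.comap X inferInstance ⊔ MeasurableSpace.comap V inferInstance)] X := fun s hs => (le_sup_left : (MeasurableSpace.comap X inferInstance) ≤ (MeasurableSpace.comap X inferInstance ⊔ MeasurableSpace.comap V inferInstance)) _ ⟨s, hs, rfl⟩
  have hVG : Measurable[(MeasurableSpace.comap X inferInstance ⊔ MeasurableSpace.comap V inferInstance)] V := fun s hs => (le_sup_right : (MeasurableSpace.comap V inferInstance) ≤ (MeasurableSpace.comap X inferInstance ⊔ MeasurableSpace.comap V inferInstance)) _ ⟨s, hs, rfl⟩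
  have hY0G : Measurable[(MeasurableSpace.comap X inferInstance ⊔ MeasurableSpace.comap V inferInstance)] Y0 := measurable_fst.comp hVG
  have hY1G : Measurable[(MeasurableSpace.comap X inferInstance ⊔ MeasurableSpace.comap V inferInstance)] Y1 := (measurable_fst.comp measurable_snd).comp hVG
  have hD0G : Measurable[(MeasurableSpace.comap X inferInstance ⊔ MeasurableSpace.comap V inferInstance)] D0 :=
    (measurable_fst.comp (measurable_snd.comp measurable_snd)).comp hVG
  have hD1G : Measurable[(MeasurableSpace.comap X inferInstance ⊔ MeasurableSpace.comap V inferInstance)] D1 :=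
    (measurable_snd.comp (measurable_snd.comp measurable_snd)).comp hVG
  have hπG : Measurable[(MeasurableSpace.comap X inferInstance ⊔ MeasurableSpace.comap V inferInstance)] fun ω => π₀ (X ω) := hπ.comp hXG
  have hgY1G : Measurable[(MeasurableSpace.comap X inferInstance ⊔ MeasurableSpace.comap V inferInstance)] fun ω => g (Y1 ω) (X ω) := hg.comp (hY1G.prodMk hXG)
  have hgY0G : Measurable[(MeasurableSpace.comap X inferInstance ⊔ MeasurableSpace.comap V inferInstance)] fun ω => g (Y0 ω) (X ω) := hg.comp (hY0G.prodMk hXG)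
  have hkey : ∀ U : Ω → ℝ, Measurable[(MeasurableSpace.comap X inferInstance ⊔ MeasurableSpace.comap V inferInstance)] U → ∀ C : ℝ, (∀ᵐ ω ∂ℙ, |U ω| ≤ C) →
      ∫ ω, Z ω * U ω ∂ℙ = ∫ ω, π₀ (X ω) * U ω ∂ℙ :=
    fun U hU C hC => key_weight X hX Z hZ hZ01 π₀ hπ hcond hπb V hV hindep U hU C hC
  have hint : ∀ f : Ω → ℝ, AEStronglyMeasurable f ℙ → ∀ c : ℝ,
      (∀ᵐ ω ∂ℙ, |f ω| ≤ c) → Integrable f ℙ := by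
    intro f hf c hb
    exact (memLp_top_of_bound hf c (hb.mono fun ω h => by
      simpa [Real.norm_eq_abs] using h)).integrable le_top
  have hZ0 : ∀ ω, 0 ≤ Z ω := fun ω => by rcases hZ01 ω with h | h <;> simp [h]
  have hZ1 : ∀ ω, Z ω ≤ 1 := fun ω => by rcases hZ01 ω with h | h <;> simp [h]
  -- the main computation, for generic weights w1 w0 and outcome function F
  have main : ∀ w1 w0 F : Ω → ℝ, Measurable[(MeasurableSpace.comap X inferInstance ⊔ MeasurableSpace.comap V inferInstance)] w1 → Measurable[(MeasurableSpace.comap X inferInstance ⊔ MeasurableSpace.comap V inferInstance)] w0 → Measurable[(MeasurableSpace.comap X inferInstance ⊔ MeasurableSpace.comap V inferInstance)] F →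
      (∀ ω, |w1 ω| ≤ 1) → (∀ ω, |w0 ω| ≤ 1) → (∀ ω, |F ω| ≤ Cg) →
      ∫ ω, (Z ω * (w1 ω * F ω / π₀ (X ω))
        - (1 - Z ω) * (w0 ω * F ω / (1 - π₀ (X ω)))) ∂ℙ
        = ∫ ω, (w1 ω - w0 ω) * F ω ∂ℙ := by
    intro w1 w0 F hw1 hw0 hF hbw1 hbw0 hbF
    have hU₁ : Measurable[(MeasurableSpace.comap X inferInstance ⊔ MeasurableSpace.comap V inferInstance)] fun ω => w1 ω * F ω / π₀ (X ω) := (hw1.mul hF).div hπG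
    have hU₂ : Measurable[(MeasurableSpace.comap X inferInstance ⊔ MeasurableSpace.comap V inferInstance)] fun ω => w0 ω * F ω / (1 - π₀ (X ω)) :=
      (hw0.mul hF).div (measurable_const.sub hπG)
    have habs : ∀ (w : Ω → ℝ), (∀ ω, |w ω| ≤ 1) → ∀ ω, |w ω * F ω| ≤ Cg := by
      intro w hbw ω
      rw [abs_mul]
      calc |w ω| * |F ω| ≤ 1 * Cg :=
            mul_le_mul (hbw ω) (hbF ω) (abs_nonneg _) zero_le_one
        _ = Cg := one_mul Cg
    have hU₁b : ∀ᵐ ω ∂ℙ, |w1 ω * F ω / π₀ (X ω)| ≤ Cg / c := by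
      filter_upwards [hover] with ω h
      rw [abs_div]
      refine div_le_div₀ hCg0 (habs w1 hbw1 ω) hc0 ?_
      rw [abs_of_nonneg (by linarith [h.1])]
      exact h.1
    have hU₂b : ∀ᵐ ω ∂ℙ, |w0 ω * F ω / (1 - π₀ (X ω))| ≤ Cg / c := by
      filter_upwards [hover] with ω h
      rw [abs_div]
      refine div_le_div₀ hCg0 (habs w0 hbw0 ω) hc0 ?_
      rw [abs_of_nonneg (by linarith [h.2])]
      linarith [h.2]
    have hU₁full : AEStronglyMeasurable (fun ω => w1 ω * F ω / π₀ (X ω)) ℙ :=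
      (hU₁.mono hGle le_rfl).aestronglyMeasurable
    have hU₂full : AEStronglyMeasurable (fun ω => w0 ω * F ω / (1 - π₀ (X ω))) ℙ :=
      (hU₂.mono hGle le_rfl).aestronglyMeasurable
    have hi1 : Integrable (fun ω => Z ω * (w1 ω * F ω / π₀ (X ω))) ℙ := by
      refine hint _ (hZ.aemeasurable.aestronglyMeasurable.mul hU₁full) (Cg / c) ?_
      filter_upwards [hU₁b] with ω h
      rw [abs_mul]
      calc |Z ω| * |w1 ω * F ω / π₀ (X ω)| ≤ 1 * (Cg / c) :=
            mul_le_mul (abs_le.2 ⟨by linarith [hZ0 ω], hZ1 ω⟩) h (abs_nonneg _) zero_le_one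
        _ = Cg / c := one_mul _
    have hi2 : Integrable (fun ω => (1 - Z ω) * (w0 ω * F ω / (1 - π₀ (X ω)))) ℙ := by
      refine hint _ (((measurable_const.sub hZ).aemeasurable.aestronglyMeasurable).mul hU₂full)
        (Cg / c) ?_
      filter_upwards [hU₂b] with ω h
      rw [abs_mul]
      calc |1 - Z ω| * |w0 ω * F ω / (1 - π₀ (X ω))| ≤ 1 * (Cg / c) :=
            mul_le_mul (abs_le.2 ⟨by linarith [hZ1 ω], by linarith [hZ0 ω]⟩) h
              (abs_nonneg _) zero_le_one
        _ = Cg / c := one_mul _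
    have hiU₂ : Integrable (fun ω => w0 ω * F ω / (1 - π₀ (X ω))) ℙ :=
      hint _ hU₂full (Cg / c) hU₂b
    have hiZU₂ : Integrable (fun ω => Z ω * (w0 ω * F ω / (1 - π₀ (X ω)))) ℙ := by
      refine hint _ (hZ.aemeasurable.aestronglyMeasurable.mul hU₂full) (Cg / c) ?_
      filter_upwards [hU₂b] with ω h
      rw [abs_mul]
      calc |Z ω| * |w0 ω * F ω / (1 - π₀ (X ω))| ≤ 1 * (Cg / c) :=
            mul_le_mul (abs_le.2 ⟨by linarith [hZ0 ω], hZ1 ω⟩) h (abs_nonneg _) zero_le_one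
        _ = Cg / c := one_mul _
    have hiπU₂ : Integrable (fun ω => π₀ (X ω) * (w0 ω * F ω / (1 - π₀ (X ω)))) ℙ := by
      refine hint _ (((hπ.comp hX).aemeasurable.aestronglyMeasurable).mul hU₂full) (Cg / c) ?_
      filter_upwards [hU₂b, hπb] with ω h hb
      rw [abs_mul]
      calc |π₀ (X ω)| * |w0 ω * F ω / (1 - π₀ (X ω))| ≤ 1 * (Cg / c) :=
            mul_le_mul (abs_le.2 ⟨by linarith [hb.1], hb.2⟩) h (abs_nonneg _) zero_le_one
        _ = Cg / c := one_mul _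
    have hiw1F : Integrable (fun ω => w1 ω * F ω) ℙ :=
      hint _ ((hw1.mul hF).mono hGle le_rfl).aestronglyMeasurable Cg
        (ae_of_all _ (habs w1 hbw1))
    have hiw0F : Integrable (fun ω => w0 ω * F ω) ℙ :=
      hint _ ((hw0.mul hF).mono hGle le_rfl).aestronglyMeasurable Cg
        (ae_of_all _ (habs w0 hbw0))
    rw [integral_sub hi1 hi2]
    rw [hkey _ hU₁ _ hU₁b]
    have e2 : ∫ ω, (1 - Z ω) * (w0 ω * F ω / (1 - π₀ (X ω))) ∂ℙ
        = ∫ ω, (1 - π₀ (X ω)) * (w0 ω * F ω / (1 - π₀ (X ω))) ∂ℙ := by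
      have l1 : ∫ ω, (1 - Z ω) * (w0 ω * F ω / (1 - π₀ (X ω))) ∂ℙ
          = ∫ ω, (w0 ω * F ω / (1 - π₀ (X ω))
              - Z ω * (w0 ω * F ω / (1 - π₀ (X ω)))) ∂ℙ :=
        integral_congr_ae (ae_of_all _ fun ω => by ring)
      have l2 : ∫ ω, (1 - π₀ (X ω)) * (w0 ω * F ω / (1 - π₀ (X ω))) ∂ℙ
          = ∫ ω, (w0 ω * F ω / (1 - π₀ (X ω))
              - π₀ (X ω) * (w0 ω * F ω / (1 - π₀ (X ω)))) ∂ℙ :=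
        integral_congr_ae (ae_of_all _ fun ω => by ring)
      rw [l1, l2, integral_sub hiU₂ hiZU₂, integral_sub hiU₂ hiπU₂, hkey _ hU₂ _ hU₂b]
    rw [e2]
    have e3 : ∫ ω, π₀ (X ω) * (w1 ω * F ω / π₀ (X ω)) ∂ℙ = ∫ ω, w1 ω * F ω ∂ℙ := by
      refine integral_congr_ae (hover.mono fun ω h => ?_)
      have hne : π₀ (X ω) ≠ 0 := ne_of_gt (lt_of_lt_of_le hc0 h.1)
      show π₀ (X ω) * (w1 ω * F ω / π₀ (X ω)) = w1 ω * F ω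
      rw [mul_comm (π₀ (X ω)), div_mul_cancel₀ _ hne]
    have e4 : ∫ ω, (1 - π₀ (X ω)) * (w0 ω * F ω / (1 - π₀ (X ω))) ∂ℙ
        = ∫ ω, w0 ω * F ω ∂ℙ := by
      refine integral_congr_ae (hover.mono fun ω h => ?_)
      have hne : 1 - π₀ (X ω) ≠ 0 := by
        have h2 : c ≤ 1 - π₀ (X ω) := by linarith [h.2]
        exact ne_of_gt (lt_of_lt_of_le hc0 h2)
      show (1 - π₀ (X ω)) * (w0 ω * F ω / (1 - π₀ (X ω))) = w0 ω * F ω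
      rw [mul_comm (1 - π₀ (X ω)), div_mul_cancel₀ _ hne]
    rw [e3, e4, ← integral_sub hiw1F hiw0F]
    exact integral_congr_ae (ae_of_all _ fun ω => by ring)
  have hbD0 : ∀ ω, |D0 ω| ≤ 1 := fun ω => by rcases hD001 ω with h | h <;> simp [h]
  have hbD1 : ∀ ω, |D1 ω| ≤ 1 := fun ω => by rcases hD101 ω with h | h <;> simp [h]
  have hbD0' : ∀ ω, |D0 ω - 1| ≤ 1 := fun ω => by
    rcases hD001 ω with h | h <;> simp [h]
  have hbD1' : ∀ ω, |D1 ω - 1| ≤ 1 := fun ω => by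
    rcases hD101 ω with h | h <;> simp [h]
  have hbgY0 : ∀ ω, |g (Y0 ω) (X ω)| ≤ Cg := fun ω => hCg _ _
  have hbgY1 : ∀ ω, |g (Y1 ω) (X ω)| ≤ Cg := fun ω => hCg _ _
  -- final a.e. identification with the complier indicator
  have hfinal : ∀ (h : Ω → ℝ), ∫ ω, (D1 ω - D0 ω) * h ω ∂ℙ
      = ∫ ω, (if D0 ω < D1 ω then h ω else 0) ∂ℙ := by
    intro h
    refine integral_congr_ae (hmono.mono fun ω hω => ?_)
    show (D1 ω - D0 ω) * h ω = if D0 ω < D1 ω then h ω else 0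
    rcases hD001 ω with h0 | h0 <;> rcases hD101 ω with h1 | h1 <;>
      norm_num [h0, h1] <;> norm_num [h0, h1] at hω
  constructor
  · -- κ⁰
    have hpt : ∀ ω, (Z ω / π₀ (X ω) - (1 - Z ω) / (1 - π₀ (X ω))) * (D ω - 1) * g (Y ω) (X ω)
        = Z ω * ((D1 ω - 1) * g (Y0 ω) (X ω) / π₀ (X ω))
          - (1 - Z ω) * ((D0 ω - 1) * g (Y0 ω) (X ω) / (1 - π₀ (X ω))) := by
      intro ω
      rcases hZ01 ω with hz | hz
      · rcases hD001 ω with hd | hd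
        · have hDω : D ω = 0 := by rw [hD ω, hz, hd]; ring
          have hYω : Y ω = Y0 ω := by rw [hY ω, hDω]; ring
          rw [hz, hd, hDω, hYω]; ring
        · have hDω : D ω = 1 := by rw [hD ω, hz, hd]; ring
          rw [hz, hd, hDω]; ring
      · rcases hD101 ω with hd | hd
        · have hDω : D ω = 0 := by rw [hD ω, hz, hd]; ring
          have hYω : Y ω = Y0 ω := by rw [hY ω, hDω]; ring
          rw [hz, hd, hDω, hYω]; ring
        · have hDω : D ω = 1 := by rw [hD ω, hz, hd]; ring
          rw [hz, hd, hDω]; ring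
    calc ∫ ω, (Z ω / π₀ (X ω) - (1 - Z ω) / (1 - π₀ (X ω))) * (D ω - 1) * g (Y ω) (X ω) ∂ℙ
        = ∫ ω, (Z ω * ((D1 ω - 1) * g (Y0 ω) (X ω) / π₀ (X ω))
            - (1 - Z ω) * ((D0 ω - 1) * g (Y0 ω) (X ω) / (1 - π₀ (X ω)))) ∂ℙ :=
          integral_congr_ae (ae_of_all _ hpt)
      _ = ∫ ω, ((D1 ω - 1) - (D0 ω - 1)) * g (Y0 ω) (X ω) ∂ℙ :=
          main _ _ _ (hD1G.sub measurable_const) (hD0G.sub measurable_const) hgY0G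
            hbD1' hbD0' hbgY0
      _ = ∫ ω, (D1 ω - D0 ω) * g (Y0 ω) (X ω) ∂ℙ :=
          integral_congr_ae (ae_of_all _ fun ω => by ring)
      _ = ∫ ω, (if D0 ω < D1 ω then g (Y0 ω) (X ω) else 0) ∂ℙ := hfinal _
  · -- κ¹
    have hpt : ∀ ω, (Z ω / π₀ (X ω) - (1 - Z ω) / (1 - π₀ (X ω))) * D ω * g (Y ω) (X ω)
        = Z ω * (D1 ω * g (Y1 ω) (X ω) / π₀ (X ω))
          - (1 - Z ω) * (D0 ω * g (Y1 ω) (X ω) / (1 - π₀ (X ω))) := by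
      intro ω
      rcases hZ01 ω with hz | hz
      · rcases hD001 ω with hd | hd
        · have hDω : D ω = 0 := by rw [hD ω, hz, hd]; ring
          rw [hz, hd, hDω]; ring
        · have hDω : D ω = 1 := by rw [hD ω, hz, hd]; ring
          have hYω : Y ω = Y1 ω := by rw [hY ω, hDω]; ring
          rw [hz, hd, hDω, hYω]; ring
      · rcases hD101 ω with hd | hd
        · have hDω : D ω = 0 := by rw [hD ω, hz, hd]; ring
          rw [hz, hd, hDω]; ring
        · have hDω : D ω = 1 := by rw [hD ω, hz, hd]; ring
          have hYω : Y ω = Y1 ω := by rw [hY ω, hDω]; ring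
          rw [hz, hd, hDω, hYω]; ring
    calc ∫ ω, (Z ω / π₀ (X ω) - (1 - Z ω) / (1 - π₀ (X ω))) * D ω * g (Y ω) (X ω) ∂ℙ
        = ∫ ω, (Z ω * (D1 ω * g (Y1 ω) (X ω) / π₀ (X ω))
            - (1 - Z ω) * (D0 ω * g (Y1 ω) (X ω) / (1 - π₀ (X ω)))) ∂ℙ :=
          integral_congr_ae (ae_of_all _ hpt)
      _ = ∫ ω, (D1 ω - D0 ω) * g (Y1 ω) (X ω) ∂ℙ :=
          main _ _ _ hD1G hD0G hgY1G hbD1 hbD0 hbgY1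
      _ = ∫ ω, (if D0 ω < D1 ω then g (Y1 ω) (X ω) else 0) ∂ℙ := hfinal _
end

section
/- Under the Identification assumption, if 𝔼[(Y⁽⁰⁾)²] < ∞ and 𝔼[(Y⁽¹⁾)²] < ∞, then the expanded Wald formula identifies the local average treatment effect: (a) 𝔼[γ₀ᴰ(1,X) − γ₀ᴰ(0,X)] = ℙ(D⁽¹⁾ > D⁽⁰⁾) > 0; (b) 𝔼[γ₀ʸ(1,X) − γ₀ʸ(0,X)] = 𝔼[(Y⁽¹⁾ − Y⁽⁰⁾) · 1{D⁽¹⁾ > D⁽⁰⁾}]; and consequently 𝔼[Y⁽¹⁾ − Y⁽⁰⁾ | D⁽¹⁾ > D⁽⁰⁾] = 𝔼[γ₀ʸ(1,X) − γ₀ʸ(0,X)] / 𝔼[γ₀ᴰ(1,X) − γ₀ᴰ(0,X)]. -/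
open MeasureTheory ProbabilityTheory
open scoped NNReal ENNReal

lemma wald_arm {Ω 𝒳 : Type*} [MeasureSpace Ω] [IsProbabilityMeasure (ℙ : Measure Ω)]
    [MeasurableSpace 𝒳]
    {X : Ω → 𝒳} (hX : Measurable X)
    {U : Ω → ℝ} (hU : Measurable U) (hU01 : ∀ ω, U ω = 0 ∨ U ω = 1)
    {p : 𝒳 → ℝ} (hp : Measurable p) {c : ℝ} (hc : 0 < c)
    (hpc : ∀ᵐ ω ∂ℙ, c ≤ p (X ω) ∧ p (X ω) ≤ 1)
    (hUp : ∀ s : Set 𝒳, MeasurableSet s →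
      ∫ ω in X ⁻¹' s, U ω ∂ℙ = ∫ ω in X ⁻¹' s, p (X ω) ∂ℙ)
    {k : 𝒳 → ℝ} (hk : Measurable k)
    (hint : Integrable (fun ω => U ω * (k (X ω) / p (X ω))) ℙ) :
    Integrable (fun ω => k (X ω)) ℙ ∧
      ∫ ω, U ω * (k (X ω) / p (X ω)) ∂ℙ = ∫ ω, k (X ω) ∂ℙ := by
  set A : Set Ω := U ⁻¹' {1} with hA_def
  have hA : MeasurableSet A := hU (measurableSet_singleton 1)
  have hUeq : ∀ (h : Ω → ℝ) ω, U ω * h ω = A.indicator h ω := by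
    intro h ω
    rcases hU01 ω with h0 | h1
    · have : ω ∉ A := by simp [hA_def, h0]
      simp [Set.indicator_of_notMem this, h0]
    · have : ω ∈ A := by simp [hA_def, h1]
      simp [Set.indicator_of_mem this, h1]
  have hpXint : Integrable (fun ω => p (X ω)) ℙ := by
    refine (integrable_const (1 : ℝ)).mono' (hp.comp hX).aestronglyMeasurable ?_
    filter_upwards [hpc] with ω hω
    rw [Real.norm_eq_abs, abs_le]
    exact ⟨by linarith [hω.1], hω.2⟩
  -- the measure identity
  have M : (((ℙ : Measure Ω).restrict A)).map X = (((ℙ : Measure Ω).map X)).withDensity (fun x => ENNReal.ofReal (p x)) := by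
    refine Measure.ext fun s hs => ?_
    rw [Measure.map_apply hX hs, Measure.restrict_apply (hX hs),
      withDensity_apply _ hs,
      setLIntegral_map hs hp.ennreal_ofReal hX,
      ← ofReal_integral_eq_lintegral_ofReal hpXint.integrableOn
        (ae_restrict_of_ae (hpc.mono fun ω hω => le_trans hc.le hω.1)),
      ← hUp s hs]
    have hUfun : U = A.indicator (fun _ => (1 : ℝ)) := by
      funext ω
      have := hUeq (fun _ => (1 : ℝ)) ω
      simpa using this
    rw [hUfun, setIntegral_indicator hA, setIntegral_const, smul_eq_mul, mul_one,
      ofReal_measureReal]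
  have haeP : ∀ᵐ x ∂(((ℙ : Measure Ω).map X)), c ≤ p x ∧ p x ≤ 1 := by
    refine (ae_map_iff hX.aemeasurable ?_).2 hpc
    exact (measurableSet_le measurable_const hp).inter (measurableSet_le hp measurable_const)
  set g : 𝒳 → ℝ := fun x => k x / p x with hg_def
  have hg : Measurable g := hk.div hp
  have heqf : (fun ω => U ω * (k (X ω) / p (X ω)))
      = A.indicator (fun ω => k (X ω) / p (X ω)) := funext fun ω => hUeq (fun ω => k (X ω) / p (X ω)) ω
  rw [heqf] at hint ⊢
  have h2 : Integrable (fun ω => g (X ω)) (((ℙ : Measure Ω).restrict A)) := (integrable_indicator_iff hA).1 hint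
  have h3 : Integrable g ((((ℙ : Measure Ω).restrict A)).map X) :=
    (integrable_map_measure hg.aestronglyMeasurable hX.aemeasurable).2 h2
  rw [M] at h3
  have h5 : Integrable (fun x => g x * (ENNReal.ofReal (p x)).toReal) (((ℙ : Measure Ω).map X)) :=
    (integrable_withDensity_iff (ENNReal.measurable_ofReal.comp hp)
      (ae_of_all _ fun x => ENNReal.ofReal_lt_top)).1 h3
  have hae_gp : ∀ᵐ x ∂(((ℙ : Measure Ω).map X)), g x * (ENNReal.ofReal (p x)).toReal = k x := by
    filter_upwards [haeP] with x hx
    have hp0 : (0:ℝ) < p x := lt_of_lt_of_le hc hx.1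
    rw [ENNReal.toReal_ofReal hp0.le, hg_def, div_mul_cancel₀ _ hp0.ne']
  have h6 : Integrable k (((ℙ : Measure Ω).map X)) := h5.congr hae_gp
  have hkXint : Integrable (fun ω => k (X ω)) ℙ :=
    (integrable_map_measure hk.aestronglyMeasurable hX.aemeasurable).1 h6
  refine ⟨hkXint, ?_⟩
  have hofReal : (fun x => ENNReal.ofReal (p x))
      = fun x => ((Real.toNNReal (p x) : ℝ≥0) : ℝ≥0∞) := rfl
  calc ∫ ω, A.indicator (fun ω => k (X ω) / p (X ω)) ω ∂ℙ
      = ∫ ω in A, g (X ω) ∂ℙ := integral_indicator hA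
    _ = ∫ x, g x ∂((((ℙ : Measure Ω).restrict A)).map X) :=
        (integral_map hX.aemeasurable hg.aestronglyMeasurable).symm
    _ = ∫ x, g x ∂((((ℙ : Measure Ω).map X)).withDensity (fun x => ENNReal.ofReal (p x))) := by rw [M]
    _ = ∫ x, (Real.toNNReal (p x)) • g x ∂(((ℙ : Measure Ω).map X)) := by
        rw [hofReal, integral_withDensity_eq_integral_smul (f := fun x => (p x).toNNReal) (by exact measurable_real_toNNReal.comp hp) g]
    _ = ∫ x, k x ∂(((ℙ : Measure Ω).map X)) := by
        refine integral_congr_ae ?_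
        filter_upwards [haeP] with x hx
        have hp0 : (0:ℝ) < p x := lt_of_lt_of_le hc hx.1
        rw [NNReal.smul_def, Real.coe_toNNReal _ hp0.le, hg_def, smul_eq_mul, mul_comm,
          div_mul_cancel₀ _ hp0.ne']
    _ = ∫ ω, k (X ω) ∂ℙ := integral_map hX.aemeasurable hk.aestronglyMeasurable


lemma wald_condexp_sup {Ω 𝒳 β : Type*} [MeasureSpace Ω] [IsProbabilityMeasure (ℙ : Measure Ω)]
    [StandardBorelSpace Ω] [MeasurableSpace 𝒳] [MeasurableSpace β]
    {X : Ω → 𝒳} (hX : Measurable X)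
    {Z : Ω → ℝ} (hZ : Measurable Z) (hZ01 : ∀ ω, Z ω = 0 ∨ Z ω = 1)
    {π₀ : 𝒳 → ℝ} (hπ : Measurable π₀)
    (hcond : ℙ[Z | MeasurableSpace.comap X inferInstance] =ᵐ[ℙ] fun ω => π₀ (X ω))
    (hbd : ∀ᵐ ω ∂ℙ, ‖π₀ (X ω)‖ ≤ 1)
    {f : Ω → β} (hf : Measurable f)
    (hindep : CondIndepFun (MeasurableSpace.comap X inferInstance) hX.comap_le f Z ℙ) :
    ℙ[Z | MeasurableSpace.comap X inferInstance
        ⊔ MeasurableSpace.comap f inferInstance] =ᵐ[ℙ] fun ω => π₀ (X ω) := by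
  have hmX : MeasurableSpace.comap X inferInstance ≤ (MeasureSpace.toMeasurableSpace : MeasurableSpace Ω) := hX.comap_le
  have hm : MeasurableSpace.comap X inferInstance ⊔ MeasurableSpace.comap f inferInstance ≤ (MeasureSpace.toMeasurableSpace : MeasurableSpace Ω) := sup_le hX.comap_le hf.comap_le
  have hZint : Integrable Z ℙ := by
    refine (integrable_const (1 : ℝ)).mono' hZ.aestronglyMeasurable ?_
    refine ae_of_all _ fun ω => ?_
    rcases hZ01 ω with h | h <;> simp [h]
  have hπXint : Integrable (fun ω => π₀ (X ω)) ℙ :=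
    (integrable_const (1 : ℝ)).mono' (hπ.comp hX).aestronglyMeasurable hbd
  have hSMπX : StronglyMeasurable[(MeasurableSpace.comap X inferInstance)] (fun ω => π₀ (X ω)) :=
    (hπ.comp (Measurable.of_comap_le le_rfl)).stronglyMeasurable
  set PP : Set (Set Ω) :=
    {S | ∃ s t, MeasurableSet s ∧ MeasurableSet t ∧ S = X ⁻¹' s ∩ f ⁻¹' t} with hPP_def
  have hgen : (MeasurableSpace.comap X inferInstance) ⊔ (MeasurableSpace.comap f inferInstance) = MeasurableSpace.generateFrom PP := by
    refine le_antisymm (sup_le ?_ ?_) (MeasurableSpace.generateFrom_le ?_)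
    · rintro S ⟨s, hs, rfl⟩
      refine MeasurableSpace.measurableSet_generateFrom ⟨s, Set.univ, hs, .univ, by simp⟩
    · rintro S ⟨t, ht, rfl⟩
      refine MeasurableSpace.measurableSet_generateFrom ⟨Set.univ, t, .univ, ht, by simp⟩
    · rintro S ⟨s, t, hs, ht, rfl⟩
      exact MeasurableSet.inter ((le_sup_left : (MeasurableSpace.comap X inferInstance) ≤ (MeasurableSpace.comap X inferInstance) ⊔ (MeasurableSpace.comap f inferInstance)) _ ⟨s, hs, rfl⟩)
        ((le_sup_right : (MeasurableSpace.comap f inferInstance) ≤ (MeasurableSpace.comap X inferInstance) ⊔ (MeasurableSpace.comap f inferInstance)) _ ⟨t, ht, rfl⟩)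
  have hpi : IsPiSystem PP := by
    rintro S ⟨s, t, hs, ht, rfl⟩ T ⟨s', t', hs', ht', rfl⟩ -
    exact ⟨s ∩ s', t ∩ t', hs.inter hs', ht.inter ht', by
      ext ω; simp; tauto⟩
  have hbasic : ∀ S ∈ PP, ∫ ω in S, Z ω ∂ℙ = ∫ ω in S, π₀ (X ω) ∂ℙ := by
    rintro S ⟨s, t, hs, ht, rfl⟩
    have hAm : MeasurableSet[(MeasurableSpace.comap X inferInstance)] (X ⁻¹' s) := ⟨s, hs, rfl⟩
    have hB : MeasurableSet[MeasureSpace.toMeasurableSpace] (f ⁻¹' t) := hf ht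
    have hZ1 : MeasurableSet[MeasureSpace.toMeasurableSpace] (Z ⁻¹' {1}) :=
      hZ (measurableSet_singleton 1)
    have hindicator_int : Integrable ((f ⁻¹' t ∩ Z ⁻¹' {1}).indicator fun _ => (1:ℝ)) ℙ :=
      (integrable_const 1).indicator (hB.inter hZ1)
    have hZeq : (f ⁻¹' t).indicator Z
        = (f ⁻¹' t ∩ Z ⁻¹' {1}).indicator (fun _ => (1:ℝ)) := by
      funext ω
      by_cases hω : ω ∈ f ⁻¹' t
      · rcases hZ01 ω with h | h <;>
          simp [Set.indicator_apply, hω, h]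
      · simp [Set.indicator_apply, hω]
    have hmul := (condIndepFun_iff_condExp_inter_preimage_eq_mul hf hZ).1 hindep t {1} ht
      (measurableSet_singleton 1)
    have hZpre : ℙ⟦Z ⁻¹' {1} | (MeasurableSpace.comap X inferInstance)⟧ =ᵐ[ℙ] fun ω => π₀ (X ω) := by
      have heq : (Z ⁻¹' {1}).indicator (fun _ => (1:ℝ)) = Z := by
        funext ω
        rcases hZ01 ω with h | h <;> simp [Set.indicator_apply, h]
      rw [heq]
      exact hcond
    have hπind : (fun ω => π₀ (X ω)) * ((f ⁻¹' t).indicator fun _ => (1:ℝ))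
        = (f ⁻¹' t).indicator (fun ω => π₀ (X ω)) := by
      funext ω
      by_cases hω : ω ∈ f ⁻¹' t <;> simp [Set.indicator_apply, hω]
    have hpull := condExp_stronglyMeasurable_mul_of_bound hmX hSMπX
      ((integrable_const (1:ℝ)).indicator hB) 1 hbd
    calc ∫ ω in X ⁻¹' s ∩ f ⁻¹' t, Z ω ∂ℙ
        = ∫ ω in X ⁻¹' s, (f ⁻¹' t).indicator Z ω ∂ℙ := (setIntegral_indicator hB).symm
      _ = ∫ ω in X ⁻¹' s, (f ⁻¹' t ∩ Z ⁻¹' {1}).indicator (fun _ => (1:ℝ)) ω ∂ℙ := by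
          rw [hZeq]
      _ = ∫ ω in X ⁻¹' s, (ℙ⟦f ⁻¹' t ∩ Z ⁻¹' {1} | (MeasurableSpace.comap X inferInstance)⟧) ω ∂ℙ :=
          (setIntegral_condExp hmX hindicator_int hAm).symm
      _ = ∫ ω in X ⁻¹' s, (ℙ⟦f ⁻¹' t | (MeasurableSpace.comap X inferInstance)⟧) ω * π₀ (X ω) ∂ℙ := by
          refine setIntegral_congr_ae (hmX _ hAm) ?_
          filter_upwards [hmul, hZpre] with ω h1 h2 _
          rw [h1, h2]
      _ = ∫ ω in X ⁻¹' s, π₀ (X ω) * (ℙ⟦f ⁻¹' t | (MeasurableSpace.comap X inferInstance)⟧) ω ∂ℙ := by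
          simp_rw [mul_comm]
      _ = ∫ ω in X ⁻¹' s,
            (ℙ[(fun ω => π₀ (X ω)) * ((f ⁻¹' t).indicator fun _ => (1:ℝ)) | (MeasurableSpace.comap X inferInstance)]) ω ∂ℙ := by
          refine setIntegral_congr_ae (hmX _ hAm) ?_
          filter_upwards [hpull] with ω h1 _
          rw [h1]; rfl
      _ = ∫ ω in X ⁻¹' s,
            ((fun ω => π₀ (X ω)) * ((f ⁻¹' t).indicator fun _ => (1:ℝ))) ω ∂ℙ := by
          refine setIntegral_condExp hmX ?_ hAm
          rw [hπind]
          exact hπXint.indicator hB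
      _ = ∫ ω in X ⁻¹' s, (f ⁻¹' t).indicator (fun ω => π₀ (X ω)) ω ∂ℙ := by rw [hπind]
      _ = ∫ ω in X ⁻¹' s ∩ f ⁻¹' t, π₀ (X ω) ∂ℙ := setIntegral_indicator hB
  have hall : ∀ S, MeasurableSet[(MeasurableSpace.comap X inferInstance) ⊔ (MeasurableSpace.comap f inferInstance)] S →
      ∫ ω in S, Z ω ∂ℙ = ∫ ω in S, π₀ (X ω) ∂ℙ := by
    intro S hS
    refine MeasurableSpace.induction_on_inter (s := PP) (m := (MeasurableSpace.comap X inferInstance) ⊔ (MeasurableSpace.comap f inferInstance))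
      (C := fun S _ => ∫ ω in S, Z ω ∂ℙ = ∫ ω in S, π₀ (X ω) ∂ℙ) hgen hpi ?_ ?_ ?_ ?_ S hS
    · simp
    · exact hbasic
    · intro t htm ht
      have h1 := integral_add_compl (hm t htm) hZint
      have h2 := integral_add_compl (hm t htm) hπXint
      have h3 : ∫ ω, Z ω ∂ℙ = ∫ ω, π₀ (X ω) ∂ℙ := by
        have := hbasic Set.univ ⟨Set.univ, Set.univ, .univ, .univ, by simp⟩
        simpa using this
      linarith
    · intro g hdisj hgm hg
      rw [integral_iUnion (μ := ℙ) (fun i => hm _ (hgm i)) hdisj hZint.integrableOn,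
        integral_iUnion (μ := ℙ) (fun i => hm _ (hgm i)) hdisj hπXint.integrableOn]
      exact tsum_congr hg
  haveI hfin : IsFiniteMeasure (Measure.trim ℙ hm) := isFiniteMeasure_trim hm
  refine (ae_eq_condExp_of_forall_setIntegral_eq hm hZint
    (fun s _ _ => hπXint.integrableOn)
    (fun s hs _ => (hall s hs).symm)
    ?_).symm
  exact StronglyMeasurable.aestronglyMeasurable
    (hSMπX.mono (le_sup_left : (MeasurableSpace.comap X inferInstance) ≤ (MeasurableSpace.comap X inferInstance) ⊔ (MeasurableSpace.comap f inferInstance)))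

lemma wald_key {Ω 𝒳 : Type*} [MeasureSpace Ω] [IsProbabilityMeasure (ℙ : Measure Ω)]
    [MeasurableSpace 𝒳]
    {X : Ω → 𝒳} (hX : Measurable X)
    {U : Ω → ℝ} (hU : Measurable U) (hU01 : ∀ ω, U ω = 0 ∨ U ω = 1)
    {p : 𝒳 → ℝ} (hp : Measurable p) {c : ℝ} (hc : 0 < c)
    (hpc : ∀ᵐ ω ∂ℙ, c ≤ p (X ω) ∧ p (X ω) ≤ 1)
    (hUp : ∀ s : Set 𝒳, MeasurableSet s →
      ∫ ω in X ⁻¹' s, U ω ∂ℙ = ∫ ω in X ⁻¹' s, p (X ω) ∂ℙ)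
    {m₁ m₂ : MeasurableSpace Ω}
    (hm₁ : m₁ ≤ (MeasureSpace.toMeasurableSpace : MeasurableSpace Ω))
    (hm₂ : m₂ ≤ (MeasureSpace.toMeasurableSpace : MeasurableSpace Ω))
    (hUSM₁ : Measurable[m₁] U)
    (hpXSM₁ : Measurable[m₁] fun ω => p (X ω))
    (hpXSM₂ : Measurable[m₂] fun ω => p (X ω))
    (hUm₂ : ℙ[U | m₂] =ᵐ[ℙ] fun ω => p (X ω))
    {W V : Ω → ℝ} (hW : Integrable W ℙ)
    (hVint : Integrable V ℙ)
    (hVSM₂ : Measurable[m₂] V)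
    {φ : Ω → ℝ} (hφ : ℙ[W | m₁] =ᵐ[ℙ] φ)
    {k : 𝒳 → ℝ} (hk : Measurable k)
    (hUφk : ∀ ω, U ω * φ ω = U ω * k (X ω))
    (hUWV : ∀ ω, U ω * W ω = U ω * V ω) :
    Integrable (fun ω => k (X ω)) ℙ ∧ ∫ ω, k (X ω) ∂ℙ = ∫ ω, V ω ∂ℙ := by
  have hUbd : ∀ ω, ‖U ω‖ ≤ 1 := by
    intro ω; rcases hU01 ω with h | h <;> simp [h]
  have hUint : Integrable U ℙ :=
    (integrable_const (1 : ℝ)).mono' hU.aestronglyMeasurable (ae_of_all _ hUbd)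
  -- the weight g = U / p(X)
  set g : Ω → ℝ := fun ω => U ω / p (X ω) with hg_def
  have hgSM : StronglyMeasurable[m₁] g := (hUSM₁.div hpXSM₁).stronglyMeasurable
  have hgbd : ∀ᵐ ω ∂ℙ, ‖g ω‖ ≤ c⁻¹ := by
    filter_upwards [hpc] with ω hω
    have hp0 : (0:ℝ) < p (X ω) := lt_of_lt_of_le hc hω.1
    rw [hg_def, Real.norm_eq_abs, abs_div, abs_of_pos hp0, div_le_iff₀ hp0]
    calc |U ω| ≤ 1 := hUbd ω
      _ ≤ c⁻¹ * c := by rw [inv_mul_cancel₀ hc.ne']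
      _ ≤ c⁻¹ * p (X ω) := by
          exact mul_le_mul_of_nonneg_left hω.1 (inv_nonneg.2 hc.le)
  have hpull₁ : ℙ[g * W | m₁] =ᵐ[ℙ] g * ℙ[W | m₁] :=
    condExp_stronglyMeasurable_mul_of_bound hm₁ hgSM hW c⁻¹ hgbd
  -- integrability of g * φ
  have hgcondint : Integrable (fun ω => g ω * (ℙ[W | m₁]) ω) ℙ := by
    have hcx : Integrable (fun ω => c⁻¹ * |(ℙ[W | m₁]) ω|) ℙ :=
      integrable_condExp.abs.const_mul c⁻¹
    refine hcx.mono'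
      (((hgSM.mono hm₁).aestronglyMeasurable).mul
        ((stronglyMeasurable_condExp.mono hm₁).aestronglyMeasurable)) ?_
    filter_upwards [hgbd] with ω hω
    rw [norm_mul]
    calc ‖g ω‖ * ‖(ℙ[W | m₁]) ω‖ ≤ c⁻¹ * ‖(ℙ[W | m₁]) ω‖ :=
          mul_le_mul_of_nonneg_right hω (norm_nonneg _)
      _ = c⁻¹ * |(ℙ[W | m₁]) ω| := by rw [Real.norm_eq_abs]
  have hgφint : Integrable (fun ω => g ω * φ ω) ℙ :=
    hgcondint.congr (hφ.mono fun ω h => by dsimp only; rw [h])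
  -- U * (k(X)/p(X)) equals g * φ pointwise
  have heq1 : (fun ω => U ω * (k (X ω) / p (X ω))) = fun ω => g ω * φ ω := by
    funext ω
    rcases hU01 ω with h | h
    · simp [hg_def, h]
    · have hφω : φ ω = k (X ω) := by have := hUφk ω; rwa [h, one_mul, one_mul] at this
      rw [hg_def]; simp only [h, hφω]
      rw [one_mul, one_div, inv_mul_eq_div]
  have hint : Integrable (fun ω => U ω * (k (X ω) / p (X ω))) ℙ := by rw [heq1]; exact hgφint
  obtain ⟨hkint, harm⟩ := wald_arm hX hU hU01 hp hc hpc hUp hk hint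
  refine ⟨hkint, ?_⟩
  -- second multiplier ff = V / p(X)
  set ff : Ω → ℝ := fun ω => V ω / p (X ω) with hff_def
  have hffSM : StronglyMeasurable[m₂] ff := (hVSM₂.div hpXSM₂).stronglyMeasurable
  have hffU : Integrable (ff * U) ℙ := by
    refine (hVint.abs.const_mul c⁻¹).mono'
      (((hffSM.mono hm₂).aestronglyMeasurable).mul hU.aestronglyMeasurable) ?_
    filter_upwards [hpc] with ω hω
    have hp0 : (0:ℝ) < p (X ω) := lt_of_lt_of_le hc hω.1
    have : ‖ff ω‖ ≤ c⁻¹ * |V ω| := by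
      rw [hff_def, Real.norm_eq_abs, abs_div, abs_of_pos hp0, div_le_iff₀ hp0]
      calc |V ω| = 1 * |V ω| := (one_mul _).symm
        _ ≤ (c⁻¹ * p (X ω)) * |V ω| := by
            refine mul_le_mul_of_nonneg_right ?_ (abs_nonneg _)
            rw [← inv_mul_cancel₀ hc.ne']
            exact mul_le_mul_of_nonneg_left hω.1 (inv_nonneg.2 hc.le)
        _ = c⁻¹ * |V ω| * p (X ω) := by ring
    calc ‖(ff * U) ω‖ = ‖ff ω‖ * ‖U ω‖ := norm_mul _ _
      _ ≤ ‖ff ω‖ * 1 := mul_le_mul_of_nonneg_left (hUbd ω) (norm_nonneg _)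
      _ = ‖ff ω‖ := mul_one _
      _ ≤ c⁻¹ * |V ω| := this
  have hpull₂ : ℙ[ff * U | m₂] =ᵐ[ℙ] ff * ℙ[U | m₂] :=
    condExp_mul_of_stronglyMeasurable_left hffSM hffU hUint
  calc ∫ ω, k (X ω) ∂ℙ
      = ∫ ω, U ω * (k (X ω) / p (X ω)) ∂ℙ := harm.symm
    _ = ∫ ω, g ω * φ ω ∂ℙ := by rw [heq1]
    _ = ∫ ω, g ω * (ℙ[W | m₁]) ω ∂ℙ := integral_congr_ae (hφ.mono fun ω h => by dsimp only; rw [h])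
    _ = ∫ ω, (ℙ[g * W | m₁]) ω ∂ℙ := (integral_congr_ae hpull₁).symm
    _ = ∫ ω, (g * W) ω ∂ℙ := integral_condExp hm₁
    _ = ∫ ω, (ff * U) ω ∂ℙ := by
        refine integral_congr_ae (ae_of_all _ fun ω => ?_)
        simp only [Pi.mul_apply, hg_def, hff_def]
        rcases hU01 ω with h | h
        · simp [h]
        · have hWV : W ω = V ω := by have := hUWV ω; rwa [h, one_mul, one_mul] at this
          rw [h, hWV]; ring
    _ = ∫ ω, (ℙ[ff * U | m₂]) ω ∂ℙ := (integral_condExp hm₂).symm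
    _ = ∫ ω, ff ω * (ℙ[U | m₂]) ω ∂ℙ := integral_congr_ae hpull₂
    _ = ∫ ω, ff ω * p (X ω) ∂ℙ := integral_congr_ae (hUm₂.mono fun ω h => by dsimp only; rw [h])
    _ = ∫ ω, V ω ∂ℙ := by
        refine integral_congr_ae ?_
        filter_upwards [hpc] with ω hω
        have hp0 : (0:ℝ) < p (X ω) := lt_of_lt_of_le hc hω.1
        rw [hff_def, div_mul_cancel₀ _ hp0.ne']


/-- Under the IV identification assumption, with square-integrable potential outcomes,
the expanded Wald formula identifies LATE:
(a) `𝔼[γ₀ᴰ(1,X) − γ₀ᴰ(0,X)] = ℙ(D⁽¹⁾ > D⁽⁰⁾) > 0`;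
(b) `𝔼[γ₀ʸ(1,X) − γ₀ʸ(0,X)] = 𝔼[(Y⁽¹⁾ − Y⁽⁰⁾)·1{D⁽¹⁾ > D⁽⁰⁾}]`;
(c) `𝔼[Y⁽¹⁾ − Y⁽⁰⁾ | D⁽¹⁾ > D⁽⁰⁾]
      = 𝔼[γ₀ʸ(1,X) − γ₀ʸ(0,X)] / 𝔼[γ₀ᴰ(1,X) − γ₀ᴰ(0,X)]`. -/
theorem expanded_wald_identifies_late
    {Ω 𝒳 : Type*} [MeasureSpace Ω] [IsProbabilityMeasure (ℙ : Measure Ω)]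
    [StandardBorelSpace Ω] [Nonempty Ω] [MeasurableSpace 𝒳]
    (X : Ω → 𝒳) (hX : Measurable X)
    (Z : Ω → ℝ) (hZ : Measurable Z) (hZ01 : ∀ ω, Z ω = 0 ∨ Z ω = 1)
    (π₀ : 𝒳 → ℝ) (hπ : Measurable π₀)
    (hcond : ∀ᵐ ω ∂ℙ, (ℙ[Z | MeasurableSpace.comap X inferInstance]) ω = π₀ (X ω))
    (c : ℝ) (hc0 : 0 < c) (hc2 : c ≤ 1/2)
    (hover : ∀ᵐ ω ∂ℙ, c ≤ π₀ (X ω) ∧ π₀ (X ω) ≤ 1 - c)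
    (Y0 Y1 : Ω → ℝ) (hY0 : Measurable Y0) (hY1 : Measurable Y1)
    (hY0sq : Integrable (fun ω => (Y0 ω) ^ 2) ℙ)
    (hY1sq : Integrable (fun ω => (Y1 ω) ^ 2) ℙ)
    (D0 D1 : Ω → ℝ) (hD0 : Measurable D0) (hD1 : Measurable D1)
    (hD001 : ∀ ω, D0 ω = 0 ∨ D0 ω = 1) (hD101 : ∀ ω, D1 ω = 0 ∨ D1 ω = 1)
    (hindep : CondIndepFun (MeasurableSpace.comap X inferInstance) hX.comap_le
      (fun ω => (Y0 ω, Y1 ω, D0 ω, D1 ω)) Z ℙ)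
    (hmono : ∀ᵐ ω ∂ℙ, D0 ω ≤ D1 ω)
    (hcompliers : 0 < ℙ {ω | D0 ω < D1 ω})
    (D : Ω → ℝ) (hD : ∀ ω, D ω = Z ω * D1 ω + (1 - Z ω) * D0 ω)
    (Y : Ω → ℝ) (hY : ∀ ω, Y ω = D ω * Y1 ω + (1 - D ω) * Y0 ω)
    (γY γD : ℝ → 𝒳 → ℝ)
    (hγY : Measurable (fun p : ℝ × 𝒳 => γY p.1 p.2))
    (hγD : Measurable (fun p : ℝ × 𝒳 => γD p.1 p.2))
    (hγYcond : ∀ᵐ ω ∂ℙ,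
      (ℙ[Y | MeasurableSpace.comap (fun ω' => (Z ω', X ω')) inferInstance]) ω
        = γY (Z ω) (X ω))
    (hγDcond : ∀ᵐ ω ∂ℙ,
      (ℙ[D | MeasurableSpace.comap (fun ω' => (Z ω', X ω')) inferInstance]) ω
        = γD (Z ω) (X ω)) :
    (∫ ω, (γD 1 (X ω) - γD 0 (X ω)) ∂ℙ = (ℙ {ω | D0 ω < D1 ω}).toReal
      ∧ 0 < ∫ ω, (γD 1 (X ω) - γD 0 (X ω)) ∂ℙ) ∧
    (∫ ω, (γY 1 (X ω) - γY 0 (X ω)) ∂ℙ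
      = ∫ ω, (if D0 ω < D1 ω then Y1 ω - Y0 ω else 0) ∂ℙ) ∧
    (∫ ω, (Y1 ω - Y0 ω) ∂(ProbabilityTheory.cond ℙ {ω | D0 ω < D1 ω})
      = (∫ ω, (γY 1 (X ω) - γY 0 (X ω)) ∂ℙ) / (∫ ω, (γD 1 (X ω) - γD 0 (X ω)) ∂ℙ)) := by
  -- basic integrability
  have sqint : ∀ (g : Ω → ℝ), Measurable g → Integrable (fun ω => g ω ^ 2) ℙ →
      Integrable g ℙ := by
    intro g hg hgsq
    have hb : Integrable (fun ω => (g ω ^ 2 + 1) / 2) ℙ :=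
      (hgsq.add (integrable_const 1)).div_const 2
    refine hb.mono' hg.aestronglyMeasurable (ae_of_all _ fun ω => ?_)
    rw [Real.norm_eq_abs]
    nlinarith [sq_nonneg (|g ω| - 1), sq_abs (g ω), abs_nonneg (g ω)]
  have hY0i : Integrable Y0 ℙ := sqint Y0 hY0 hY0sq
  have hY1i : Integrable Y1 ℙ := sqint Y1 hY1 hY1sq
  have bint : ∀ (g : Ω → ℝ), Measurable g → (∀ ω, g ω = 0 ∨ g ω = 1) → Integrable g ℙ := by
    intro g hg hg01
    refine (integrable_const (1:ℝ)).mono' hg.aestronglyMeasurable (ae_of_all _ fun ω => ?_)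
    rcases hg01 ω with h | h <;> simp [h]
  have hZi : Integrable Z ℙ := bint Z hZ hZ01
  have hD0i : Integrable D0 ℙ := bint D0 hD0 hD001
  have hD1i : Integrable D1 ℙ := bint D1 hD1 hD101
  have hDfun : D = fun ω => Z ω * D1 ω + (1 - Z ω) * D0 ω := funext hD
  have hDmeas : Measurable D := by
    rw [hDfun]; exact (hZ.mul hD1).add ((measurable_const.sub hZ).mul hD0)
  have hD01 : ∀ ω, D ω = 0 ∨ D ω = 1 := by
    intro ω
    rcases hZ01 ω with h | h <;> rcases hD001 ω with h0 | h0 <;> rcases hD101 ω with h1 | h1 <;>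
      simp [hD ω, h, h0, h1]
  have hDi : Integrable D ℙ := bint D hDmeas hD01
  have hYfun : Y = fun ω => D ω * Y1 ω + (1 - D ω) * Y0 ω := funext hY
  have hYmeas : Measurable Y := by
    rw [hYfun]; exact (hDmeas.mul hY1).add ((measurable_const.sub hDmeas).mul hY0)
  have hYi : Integrable Y ℙ := by
    refine (hY0i.abs.add hY1i.abs).mono' hYmeas.aestronglyMeasurable (ae_of_all _ fun ω => ?_)
    rcases hD01 ω with h | h <;>
      · rw [hY ω, h, Real.norm_eq_abs]
        simp only [one_mul, zero_mul, sub_zero, sub_self, zero_add, add_zero, mul_one, mul_zero]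
        first
        | calc |Y0 ω| ≤ |Y0 ω| + |Y1 ω| := le_add_of_nonneg_right (abs_nonneg _)
            _ = _ := rfl
        | calc |Y1 ω| ≤ |Y1 ω| + |Y0 ω| := le_add_of_nonneg_right (abs_nonneg _)
            _ = |Y0 ω| + |Y1 ω| := add_comm _ _
  -- structural outcome variables
  set W1 : Ω → ℝ := fun ω => D1 ω * Y1 ω + (1 - D1 ω) * Y0 ω with hW1_def
  set W0 : Ω → ℝ := fun ω => D0 ω * Y1 ω + (1 - D0 ω) * Y0 ω with hW0_def
  have hW1meas : Measurable W1 := (hD1.mul hY1).add ((measurable_const.sub hD1).mul hY0)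
  have hW0meas : Measurable W0 := (hD0.mul hY1).add ((measurable_const.sub hD0).mul hY0)
  have hWint : ∀ (E : Ω → ℝ), Measurable E → (∀ ω, E ω = 0 ∨ E ω = 1) →
      Integrable (fun ω => E ω * Y1 ω + (1 - E ω) * Y0 ω) ℙ := by
    intro E hE hE01
    refine (hY0i.abs.add hY1i.abs).mono'
      (((hE.mul hY1).add ((measurable_const.sub hE).mul hY0)).aestronglyMeasurable)
      (ae_of_all _ fun ω => ?_)
    rcases hE01 ω with h | h <;>
      · rw [h, Real.norm_eq_abs]
        simp only [one_mul, zero_mul, sub_zero, sub_self, zero_add, add_zero, mul_one, mul_zero]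
        first
        | calc |Y0 ω| ≤ |Y0 ω| + |Y1 ω| := le_add_of_nonneg_right (abs_nonneg _)
            _ = _ := rfl
        | calc |Y1 ω| ≤ |Y1 ω| + |Y0 ω| := le_add_of_nonneg_right (abs_nonneg _)
            _ = |Y0 ω| + |Y1 ω| := add_comm _ _
  have hW1i : Integrable W1 ℙ := hWint D1 hD1 hD101
  have hW0i : Integrable W0 ℙ := hWint D0 hD0 hD001
  -- measurable-space structure
  set quad : Ω → ℝ × ℝ × ℝ × ℝ := fun ω => (Y0 ω, Y1 ω, D0 ω, D1 ω) with hquad_def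
  have hquad : Measurable quad := hY0.prodMk (hY1.prodMk (hD0.prodMk hD1))
  have hZX : Measurable (fun ω' => (Z ω', X ω')) := hZ.prodMk hX
  have hm₁ : MeasurableSpace.comap (fun ω' => (Z ω', X ω')) inferInstance
      ≤ (MeasureSpace.toMeasurableSpace : MeasurableSpace Ω) := hZX.comap_le
  have hm₂ : MeasurableSpace.comap X inferInstance ⊔ MeasurableSpace.comap quad inferInstance
      ≤ (MeasureSpace.toMeasurableSpace : MeasurableSpace Ω) :=
    sup_le hX.comap_le hquad.comap_le
  have hZXm : Measurable[MeasurableSpace.comap (fun ω' => (Z ω', X ω')) inferInstance]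
      (fun ω' => (Z ω', X ω')) := Measurable.of_comap_le le_rfl
  have hZm₁ : Measurable[MeasurableSpace.comap (fun ω' => (Z ω', X ω')) inferInstance] Z :=
    measurable_fst.comp hZXm
  have hXm₁ : Measurable[MeasurableSpace.comap (fun ω' => (Z ω', X ω')) inferInstance] X :=
    measurable_snd.comp hZXm
  have hquadm₂ : Measurable[MeasurableSpace.comap X inferInstance
      ⊔ MeasurableSpace.comap quad inferInstance] quad := Measurable.of_comap_le le_sup_right
  have hXm₂ : Measurable[MeasurableSpace.comap X inferInstance
      ⊔ MeasurableSpace.comap quad inferInstance] X := Measurable.of_comap_le le_sup_left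
  have hD0m₂ : Measurable[MeasurableSpace.comap X inferInstance
      ⊔ MeasurableSpace.comap quad inferInstance] D0 :=
    measurable_fst.comp (measurable_snd.comp (measurable_snd.comp hquadm₂))
  have hD1m₂ : Measurable[MeasurableSpace.comap X inferInstance
      ⊔ MeasurableSpace.comap quad inferInstance] D1 :=
    measurable_snd.comp (measurable_snd.comp (measurable_snd.comp hquadm₂))
  have hY0m₂ : Measurable[MeasurableSpace.comap X inferInstance
      ⊔ MeasurableSpace.comap quad inferInstance] Y0 := measurable_fst.comp hquadm₂
  have hY1m₂ : Measurable[MeasurableSpace.comap X inferInstance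
      ⊔ MeasurableSpace.comap quad inferInstance] Y1 :=
    measurable_fst.comp (measurable_snd.comp hquadm₂)
  have hW1m₂ : Measurable[MeasurableSpace.comap X inferInstance
      ⊔ MeasurableSpace.comap quad inferInstance] W1 :=
    (hD1m₂.mul hY1m₂).add ((measurable_const.sub hD1m₂).mul hY0m₂)
  have hW0m₂ : Measurable[MeasurableSpace.comap X inferInstance
      ⊔ MeasurableSpace.comap quad inferInstance] W0 :=
    (hD0m₂.mul hY1m₂).add ((measurable_const.sub hD0m₂).mul hY0m₂)
  -- overlap-derived bounds
  have hbd1 : ∀ᵐ ω ∂ℙ, ‖π₀ (X ω)‖ ≤ 1 := by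
    filter_upwards [hover] with ω hω
    rw [Real.norm_eq_abs, abs_le]
    constructor <;> linarith
  have hpc1 : ∀ᵐ ω ∂ℙ, c ≤ π₀ (X ω) ∧ π₀ (X ω) ≤ 1 := by
    filter_upwards [hover] with ω hω
    exact ⟨hω.1, by linarith [hω.2]⟩
  have hpc0 : ∀ᵐ ω ∂ℙ, c ≤ 1 - π₀ (X ω) ∧ 1 - π₀ (X ω) ≤ 1 := by
    filter_upwards [hover] with ω hω
    constructor <;> linarith [hω.1, hω.2]
  -- conditional expectation over σ(X) ⊔ σ(quad)
  have hKey : ℙ[Z | MeasurableSpace.comap X inferInstance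
      ⊔ MeasurableSpace.comap quad inferInstance] =ᵐ[ℙ] fun ω => π₀ (X ω) :=
    wald_condexp_sup hX hZ hZ01 hπ hcond hbd1 hquad hindep
  have hπXi : Integrable (fun ω => π₀ (X ω)) ℙ :=
    (integrable_const (1:ℝ)).mono' (hπ.comp hX).aestronglyMeasurable hbd1
  have hKey0 : ℙ[(fun ω => 1 - Z ω) | MeasurableSpace.comap X inferInstance
      ⊔ MeasurableSpace.comap quad inferInstance] =ᵐ[ℙ] fun ω => 1 - π₀ (X ω) := by
    have hsub : ℙ[(fun _ : Ω => (1:ℝ)) - Z | MeasurableSpace.comap X inferInstance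
        ⊔ MeasurableSpace.comap quad inferInstance] =ᵐ[ℙ]
        ℙ[(fun _ : Ω => (1:ℝ)) | MeasurableSpace.comap X inferInstance
          ⊔ MeasurableSpace.comap quad inferInstance]
        - ℙ[Z | MeasurableSpace.comap X inferInstance
          ⊔ MeasurableSpace.comap quad inferInstance] :=
      condExp_sub (integrable_const (1:ℝ)) hZi _
    have hc1 : ℙ[(fun _ : Ω => (1:ℝ)) | MeasurableSpace.comap X inferInstance
        ⊔ MeasurableSpace.comap quad inferInstance] = fun _ => (1:ℝ) := condExp_const hm₂ 1
    have heqf : (fun ω => 1 - Z ω) = (fun _ : Ω => (1:ℝ)) - Z := rfl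
    rw [heqf]
    filter_upwards [hsub, hKey] with ω h1 h2
    rw [h1, Pi.sub_apply, hc1, h2]
  -- set-integral identity over σ(X)
  have hUp1 : ∀ s : Set 𝒳, MeasurableSet s →
      ∫ ω in X ⁻¹' s, Z ω ∂ℙ = ∫ ω in X ⁻¹' s, π₀ (X ω) ∂ℙ := by
    intro s hs
    rw [← setIntegral_condExp hX.comap_le hZi (⟨s, hs, rfl⟩ :
      MeasurableSet[MeasurableSpace.comap X inferInstance] (X ⁻¹' s))]
    exact setIntegral_congr_ae (hX hs) (hcond.mono fun ω h _ => h)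
  have hUp0 : ∀ s : Set 𝒳, MeasurableSet s →
      ∫ ω in X ⁻¹' s, (1 - Z ω) ∂ℙ = ∫ ω in X ⁻¹' s, (1 - π₀ (X ω)) ∂ℙ := by
    intro s hs
    rw [integral_sub (integrable_const 1).integrableOn hZi.integrableOn,
      integral_sub (integrable_const 1).integrableOn hπXi.integrableOn, hUp1 s hs]
  have hU001 : ∀ ω, 1 - Z ω = 0 ∨ 1 - Z ω = 1 := by
    intro ω; rcases hZ01 ω with h | h <;> simp [h]
  have hU0meas : Measurable (fun ω => 1 - Z ω) := measurable_const.sub hZ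
  have hU0m₁ : Measurable[MeasurableSpace.comap (fun ω' => (Z ω', X ω')) inferInstance]
      (fun ω => 1 - Z ω) := measurable_const.sub hZm₁
  have hpXm₁ : Measurable[MeasurableSpace.comap (fun ω' => (Z ω', X ω')) inferInstance]
      (fun ω => π₀ (X ω)) := hπ.comp hXm₁
  have hpXm₂ : Measurable[MeasurableSpace.comap X inferInstance
      ⊔ MeasurableSpace.comap quad inferInstance] (fun ω => π₀ (X ω)) := hπ.comp hXm₂
  -- measurability of the slices γ z
  have hslice : ∀ (γ : ℝ → 𝒳 → ℝ), Measurable (fun p : ℝ × 𝒳 => γ p.1 p.2) →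
      ∀ z : ℝ, Measurable (γ z) := by
    intro γ hγ z
    exact hγ.comp (measurable_const.prodMk measurable_id)
  -- the four applications of the key lemma
  have RD1 := wald_key hX hZ hZ01 hπ hc0 hpc1 hUp1 hm₁ hm₂ hZm₁ hpXm₁ hpXm₂ hKey hDi hD1i hD1m₂
    hγDcond (hslice γD hγD 1)
    (fun ω => by rcases hZ01 ω with h | h <;> simp [h])
    (fun ω => by rcases hZ01 ω with h | h <;> (rw [hD ω, h]; ring))
  have RD0 := wald_key hX hU0meas hU001 (measurable_const.sub hπ) hc0 hpc0 hUp0 hm₁ hm₂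
    hU0m₁ (measurable_const.sub hpXm₁) (measurable_const.sub hpXm₂) hKey0 hDi hD0i hD0m₂
    hγDcond (hslice γD hγD 0)
    (fun ω => by rcases hZ01 ω with h | h <;> simp [h])
    (fun ω => by rcases hZ01 ω with h | h <;> (rw [hD ω, h]; ring))
  have RY1 := wald_key hX hZ hZ01 hπ hc0 hpc1 hUp1 hm₁ hm₂ hZm₁ hpXm₁ hpXm₂ hKey hYi hW1i hW1m₂
    hγYcond (hslice γY hγY 1)
    (fun ω => by rcases hZ01 ω with h | h <;> simp [h])
    (fun ω => by rcases hZ01 ω with h | h <;> (rw [hY ω, hD ω, h, hW1_def]; ring))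
  have RY0 := wald_key hX hU0meas hU001 (measurable_const.sub hπ) hc0 hpc0 hUp0 hm₁ hm₂
    hU0m₁ (measurable_const.sub hpXm₁) (measurable_const.sub hpXm₂) hKey0 hYi hW0i hW0m₂
    hγYcond (hslice γY hγY 0)
    (fun ω => by rcases hZ01 ω with h | h <;> simp [h])
    (fun ω => by rcases hZ01 ω with h | h <;> (rw [hY ω, hD ω, h, hW0_def]; ring))
  -- the complier set
  set A : Set Ω := {ω | D0 ω < D1 ω} with hA_def
  have hA : MeasurableSet A := measurableSet_lt hD0 hD1
  have hdiff : (fun ω => D1 ω - D0 ω) =ᵐ[ℙ] A.indicator (fun _ => (1:ℝ)) := by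
    filter_upwards [hmono] with ω hω
    rcases hD001 ω with h0 | h0 <;> rcases hD101 ω with h1 | h1
    · have : ω ∉ A := by simp [hA_def, h0, h1]
      simp [Set.indicator_of_notMem this, h0, h1]
    · have : ω ∈ A := by
        simp only [hA_def, Set.mem_setOf_eq, h0, h1]
        norm_num
      simp [Set.indicator_of_mem this, h0, h1]
    · exfalso; rw [h0, h1] at hω; linarith
    · have : ω ∉ A := by simp [hA_def, h0, h1]
      simp [Set.indicator_of_notMem this, h0, h1]
  have ha_eq : ∫ ω, (γD 1 (X ω) - γD 0 (X ω)) ∂ℙ = (ℙ A).toReal := by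
    rw [integral_sub RD1.1 RD0.1, RD1.2, RD0.2, ← integral_sub hD1i hD0i,
      integral_congr_ae hdiff]
    have : ∫ ω, A.indicator (fun _ => (1:ℝ)) ω ∂ℙ = ∫ ω, A.indicator 1 ω ∂ℙ := rfl
    rw [this, integral_indicator_one hA]
    rfl
  have ha_pos : 0 < ∫ ω, (γD 1 (X ω) - γD 0 (X ω)) ∂ℙ := by
    rw [ha_eq]
    exact ENNReal.toReal_pos hcompliers.ne' (measure_ne_top _ _)
  have hWdiff : (fun ω => W1 ω - W0 ω) =ᵐ[ℙ]
      fun ω => if D0 ω < D1 ω then Y1 ω - Y0 ω else 0 := by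
    filter_upwards [hmono] with ω hω
    have e1 : W1 ω = D1 ω * Y1 ω + (1 - D1 ω) * Y0 ω := rfl
    have e0 : W0 ω = D0 ω * Y1 ω + (1 - D0 ω) * Y0 ω := rfl
    rcases hD001 ω with h0 | h0 <;> rcases hD101 ω with h1 | h1
    · have hne : ¬ (D0 ω < D1 ω) := by rw [h0, h1]; exact lt_irrefl 0
      rw [if_neg hne, e1, e0, h0, h1]; ring
    · have hlt : D0 ω < D1 ω := by rw [h0, h1]; norm_num
      rw [if_pos hlt, e1, e0, h0, h1]; ring
    · exfalso; rw [h0, h1] at hω; linarith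
    · have hne : ¬ (D0 ω < D1 ω) := by rw [h0, h1]; exact lt_irrefl 1
      rw [if_neg hne, e1, e0, h0, h1]; ring
  have hb_eq : ∫ ω, (γY 1 (X ω) - γY 0 (X ω)) ∂ℙ
      = ∫ ω, (if D0 ω < D1 ω then Y1 ω - Y0 ω else 0) ∂ℙ := by
    rw [integral_sub RY1.1 RY0.1, RY1.2, RY0.2, ← integral_sub hW1i hW0i,
      integral_congr_ae hWdiff]
  refine ⟨⟨ha_eq, ha_pos⟩, hb_eq, ?_⟩
  -- part (c)
  have hY10i : Integrable (fun ω => Y1 ω - Y0 ω) ℙ := hY1i.sub hY0i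
  have hiteq : ∫ ω, (if D0 ω < D1 ω then Y1 ω - Y0 ω else 0) ∂ℙ
      = ∫ ω in A, (Y1 ω - Y0 ω) ∂ℙ := by
    rw [← integral_indicator hA]
    refine integral_congr_ae (ae_of_all _ fun ω => ?_)
    dsimp only
    by_cases h : D0 ω < D1 ω
    · rw [if_pos h, Set.indicator_of_mem (by simpa [hA_def] using h)]
    · rw [if_neg h, Set.indicator_of_notMem (by simpa [hA_def] using h)]
  rw [hb_eq, ha_eq, hiteq]
  rw [ProbabilityTheory.cond, integral_smul_measure, ENNReal.toReal_inv, smul_eq_mul,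
    div_eq_mul_inv, mul_comm]
end

section
/- For every measurable function γ : {0,1} × 𝒳 → ℝ with 𝔼[γ(Z,X)²] < ∞, the functional γ ↦ γ(1,X) − γ(0,X) is mean-square continuous: 𝔼[(γ(1,X) − γ(0,X))²] ≤ (2/c̄) · 𝔼[γ(Z,X)²]. In particular, for two such functions γ and γ₀, 𝔼[((γ(1,X) − γ(0,X)) − (γ₀(1,X) − γ₀(0,X)))²] ≤ (2/c̄) · 𝔼[(γ(Z,X) − γ₀(Z,X))²]. -/
open MeasureTheory ProbabilityTheory

lemma aux_key_msc {Ω 𝒳 : Type*} [MeasureSpace Ω] [IsProbabilityMeasure (ℙ : Measure Ω)]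
    [MeasurableSpace 𝒳] (X : Ω → 𝒳) (hX : Measurable X)
    (W : Ω → ℝ) (hW : Measurable W) (hWbd : ∀ ω, |W ω| ≤ 1)
    (f : 𝒳 → ℝ) (hf : Measurable f) (hf0 : ∀ x, 0 ≤ f x)
    (hint : Integrable (fun ω => W ω * f (X ω)) ℙ)
    (c : ℝ) (hc0 : 0 < c)
    (hge : ∀ᵐ ω ∂ℙ, c ≤ (ℙ[W | MeasurableSpace.comap X inferInstance]) ω) :
    Integrable (fun ω => f (X ω)) ℙ ∧
      ∫ ω, f (X ω) ∂ℙ ≤ (1/c) * ∫ ω, W ω * f (X ω) ∂ℙ := by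
  set m : MeasurableSpace Ω := MeasurableSpace.comap X inferInstance with hmdef
  have hm : m ≤ _ := hX.comap_le
  have hXm : Measurable[m] X := Measurable.of_comap_le le_rfl
  have hsm : StronglyMeasurable[m] (fun ω => f (X ω)) :=
    (hf.comp hXm).stronglyMeasurable
  have hWint : Integrable W ℙ := by
    refine Integrable.mono' (integrable_const (1:ℝ)) hW.aestronglyMeasurable ?_
    filter_upwards with ω using hWbd ω
  have hmul1 : Integrable ((fun ω => f (X ω)) * W) ℙ := by
    have heq : ((fun ω => f (X ω)) * W) = fun ω => W ω * f (X ω) := by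
      funext ω; simp [mul_comm]
    rw [heq]; exact hint
  have hpull : ℙ[(fun ω => f (X ω)) * W | m] =ᵐ[ℙ] (fun ω => f (X ω)) * ℙ[W|m] :=
    condExp_mul_of_stronglyMeasurable_left hsm hmul1 hWint
  have hlow : ∀ᵐ ω ∂ℙ, c * f (X ω) ≤ (ℙ[(fun ω => f (X ω)) * W | m]) ω := by
    filter_upwards [hpull, hge] with ω h1 h2
    rw [h1]
    simp only [Pi.mul_apply]
    calc c * f (X ω) = f (X ω) * c := mul_comm _ _
      _ ≤ f (X ω) * (ℙ[W|m]) ω := mul_le_mul_of_nonneg_left h2 (hf0 _)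
  have hcint : Integrable (ℙ[(fun ω => f (X ω)) * W | m]) ℙ := integrable_condExp
  have hbound : ∀ᵐ ω ∂ℙ, f (X ω) ≤ (1/c) * (ℙ[(fun ω => f (X ω)) * W | m]) ω := by
    filter_upwards [hlow] with ω h
    have h2 : (1/c) * (c * f (X ω)) ≤ (1/c) * (ℙ[(fun ω => f (X ω)) * W | m]) ω :=
      mul_le_mul_of_nonneg_left h (by positivity)
    calc f (X ω) = (1/c) * (c * f (X ω)) := by field_simp
      _ ≤ _ := h2
  have hfint : Integrable (fun ω => f (X ω)) ℙ := by
    refine Integrable.mono' (hcint.const_mul (1/c)) (hf.comp hX).aestronglyMeasurable ?_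
    filter_upwards [hbound] with ω h
    rw [Real.norm_eq_abs, abs_of_nonneg (hf0 _)]
    exact h
  refine ⟨hfint, ?_⟩
  have hstep : ∫ ω, f (X ω) ∂ℙ ≤ ∫ ω, (1/c) * (ℙ[(fun ω => f (X ω)) * W | m]) ω ∂ℙ :=
    integral_mono_ae hfint (hcint.const_mul (1/c)) hbound
  have hci : ∫ ω, (ℙ[(fun ω => f (X ω)) * W | m]) ω ∂ℙ = ∫ ω, W ω * f (X ω) ∂ℙ := by
    rw [integral_condExp hm]
    exact integral_congr_ae (Filter.Eventually.of_forall fun ω => by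
      simp [mul_comm])
  calc ∫ ω, f (X ω) ∂ℙ ≤ ∫ ω, (1/c) * (ℙ[(fun ω => f (X ω)) * W | m]) ω ∂ℙ := hstep
    _ = (1/c) * ∫ ω, (ℙ[(fun ω => f (X ω)) * W | m]) ω ∂ℙ := integral_const_mul _ _
    _ = (1/c) * ∫ ω, W ω * f (X ω) ∂ℙ := by rw [hci]


/-- Mean-square continuity of `γ ↦ γ(1,X) − γ(0,X)` under overlap: for every measurable
square-integrable `γ`, `𝔼[(γ(1,X) − γ(0,X))²] ≤ (2/c̄)·𝔼[γ(Z,X)²]`; in particular, for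
two such functions `γ`, `γ₀`,
`𝔼[((γ(1,X) − γ(0,X)) − (γ₀(1,X) − γ₀(0,X)))²] ≤ (2/c̄)·𝔼[(γ(Z,X) − γ₀(Z,X))²]`. -/
theorem mean_square_continuity_under_overlap
    {Ω 𝒳 : Type*} [MeasureSpace Ω] [IsProbabilityMeasure (ℙ : Measure Ω)]
    [MeasurableSpace 𝒳]
    (X : Ω → 𝒳) (hX : Measurable X)
    (Z : Ω → ℝ) (hZ : Measurable Z) (hZ01 : ∀ ω, Z ω = 0 ∨ Z ω = 1)
    (π₀ : 𝒳 → ℝ) (hπ : Measurable π₀)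
    (hcond : ∀ᵐ ω ∂ℙ, (ℙ[Z | MeasurableSpace.comap X inferInstance]) ω = π₀ (X ω))
    (c : ℝ) (hc0 : 0 < c) (hc2 : c ≤ 1/2)
    (hover : ∀ᵐ ω ∂ℙ, c ≤ π₀ (X ω) ∧ π₀ (X ω) ≤ 1 - c) :
    (∀ γ : ℝ → 𝒳 → ℝ, Measurable (fun p : ℝ × 𝒳 => γ p.1 p.2) →
      Integrable (fun ω => (γ (Z ω) (X ω)) ^ 2) ℙ →
      ∫ ω, (γ 1 (X ω) - γ 0 (X ω)) ^ 2 ∂ℙ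
        ≤ (2 / c) * ∫ ω, (γ (Z ω) (X ω)) ^ 2 ∂ℙ) ∧
    (∀ γ γ₀ : ℝ → 𝒳 → ℝ,
      Measurable (fun p : ℝ × 𝒳 => γ p.1 p.2) →
      Measurable (fun p : ℝ × 𝒳 => γ₀ p.1 p.2) →
      Integrable (fun ω => (γ (Z ω) (X ω)) ^ 2) ℙ →
      Integrable (fun ω => (γ₀ (Z ω) (X ω)) ^ 2) ℙ →
      ∫ ω, ((γ 1 (X ω) - γ 0 (X ω)) - (γ₀ 1 (X ω) - γ₀ 0 (X ω))) ^ 2 ∂ℙ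
        ≤ (2 / c) * ∫ ω, (γ (Z ω) (X ω) - γ₀ (Z ω) (X ω)) ^ 2 ∂ℙ) := by
  have hm : MeasurableSpace.comap X inferInstance ≤ MeasureSpace.toMeasurableSpace := hX.comap_le
  have hZbd : ∀ ω, |Z ω| ≤ 1 := by
    intro ω; rcases hZ01 ω with h | h <;> rw [h] <;> norm_num
  have hZint : Integrable Z ℙ := by
    refine Integrable.mono' (integrable_const (1:ℝ)) hZ.aestronglyMeasurable ?_
    filter_upwards with ω using hZbd ω
  have hcondZ : ∀ᵐ ω ∂ℙ, c ≤ (ℙ[Z | MeasurableSpace.comap X inferInstance]) ω := by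
    filter_upwards [hcond, hover] with ω h1 h2
    rw [h1]; exact h2.1
  have hcond1Z : ∀ᵐ ω ∂ℙ, c ≤ (ℙ[(fun ω => 1 - Z ω) | MeasurableSpace.comap X inferInstance]) ω := by
    have hsub : ℙ[(fun ω => 1 - Z ω) | MeasurableSpace.comap X inferInstance] =ᵐ[ℙ]
        ℙ[(fun _ => (1:ℝ)) | MeasurableSpace.comap X inferInstance] - ℙ[Z | MeasurableSpace.comap X inferInstance] := condExp_sub (integrable_const (1:ℝ)) hZint _
    have hconst : ℙ[(fun _ => (1:ℝ)) | MeasurableSpace.comap X inferInstance] = fun _ => (1:ℝ) := condExp_const hm 1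
    filter_upwards [hsub, hcond, hover] with ω h1 h2 h3
    rw [h1, Pi.sub_apply, hconst, h2]
    show c ≤ 1 - π₀ (X ω)
    linarith [h3.2]
  -- main first part
  have main : ∀ γ : ℝ → 𝒳 → ℝ, Measurable (fun p : ℝ × 𝒳 => γ p.1 p.2) →
      Integrable (fun ω => (γ (Z ω) (X ω)) ^ 2) ℙ →
      ∫ ω, (γ 1 (X ω) - γ 0 (X ω)) ^ 2 ∂ℙ
        ≤ (2 / c) * ∫ ω, (γ (Z ω) (X ω)) ^ 2 ∂ℙ := by
    intro γ hγ hγint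
    set f1 : 𝒳 → ℝ := fun x => (γ 1 x) ^ 2 with hf1def
    set f0 : 𝒳 → ℝ := fun x => (γ 0 x) ^ 2 with hf0def
    have hγ1 : Measurable (fun x => γ 1 x) :=
      hγ.comp (measurable_const.prodMk measurable_id)
    have hγ0 : Measurable (fun x => γ 0 x) :=
      hγ.comp (measurable_const.prodMk measurable_id)
    have hf1 : Measurable f1 := hγ1.pow_const 2
    have hf0 : Measurable f0 := hγ0.pow_const 2
    have hf1nn : ∀ x, 0 ≤ f1 x := fun x => sq_nonneg _
    have hf0nn : ∀ x, 0 ≤ f0 x := fun x => sq_nonneg _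
    have hmeasγZX : Measurable (fun ω => γ (Z ω) (X ω)) := hγ.comp (hZ.prodMk hX)
    have hA : Integrable (fun ω => Z ω * f1 (X ω)) ℙ := by
      refine Integrable.mono' hγint ((hZ.mul (hf1.comp hX)).aestronglyMeasurable) ?_
      filter_upwards with ω
      rcases hZ01 ω with h | h <;> rw [h] <;> simp [hf1def, h, abs_of_nonneg, sq_nonneg]
    have hB : Integrable (fun ω => (1 - Z ω) * f0 (X ω)) ℙ := by
      refine Integrable.mono' hγint
        (((measurable_const.sub hZ).mul (hf0.comp hX)).aestronglyMeasurable) ?_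
      filter_upwards with ω
      rcases hZ01 ω with h | h <;> rw [h] <;> simp [hf0def, h, abs_of_nonneg, sq_nonneg]
    have hident : ∀ ω, (γ (Z ω) (X ω)) ^ 2 = Z ω * f1 (X ω) + (1 - Z ω) * f0 (X ω) := by
      intro ω
      rcases hZ01 ω with h | h <;> rw [h] <;> simp [hf1def, hf0def]
    obtain ⟨hI1, hE1⟩ := aux_key_msc X hX Z hZ hZbd f1 hf1 hf1nn hA c hc0 hcondZ
    obtain ⟨hI0, hE0⟩ := aux_key_msc X hX (fun ω => 1 - Z ω) (measurable_const.sub hZ)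
      (fun ω => by rcases hZ01 ω with h | h <;> simp [h])
      f0 hf0 hf0nn hB c hc0 hcond1Z
    -- pointwise bound
    have hpw : ∀ ω, (γ 1 (X ω) - γ 0 (X ω)) ^ 2 ≤ 2 * f1 (X ω) + 2 * f0 (X ω) := by
      intro ω; simp only [hf1def, hf0def]; nlinarith [sq_nonneg (γ 1 (X ω) + γ 0 (X ω))]
    have hgint : Integrable (fun ω => 2 * f1 (X ω) + 2 * f0 (X ω)) ℙ :=
      (hI1.const_mul 2).add (hI0.const_mul 2)
    have hLint : Integrable (fun ω => (γ 1 (X ω) - γ 0 (X ω)) ^ 2) ℙ := by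
      refine Integrable.mono' hgint
        ((((hγ1.comp hX).sub (hγ0.comp hX)).pow_const 2).aestronglyMeasurable) ?_
      filter_upwards with ω
      rw [Real.norm_eq_abs, abs_of_nonneg (sq_nonneg _)]
      exact hpw ω
    have hsum : ∫ ω, (γ (Z ω) (X ω)) ^ 2 ∂ℙ
        = ∫ ω, Z ω * f1 (X ω) ∂ℙ + ∫ ω, (1 - Z ω) * f0 (X ω) ∂ℙ := by
      rw [← integral_add hA hB]
      exact integral_congr_ae (Filter.Eventually.of_forall fun ω => hident ω)
    have hAnn : 0 ≤ ∫ ω, Z ω * f1 (X ω) ∂ℙ := by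
      refine integral_nonneg fun ω => ?_
      rcases hZ01 ω with h | h <;> rw [h] <;> simp [hf1nn (X ω), sq_nonneg]
    have hBnn : 0 ≤ ∫ ω, (1 - Z ω) * f0 (X ω) ∂ℙ := by
      refine integral_nonneg fun ω => ?_
      rcases hZ01 ω with h | h <;> rw [h] <;> simp [hf0nn (X ω), sq_nonneg]
    calc ∫ ω, (γ 1 (X ω) - γ 0 (X ω)) ^ 2 ∂ℙ
        ≤ ∫ ω, (2 * f1 (X ω) + 2 * f0 (X ω)) ∂ℙ :=
          integral_mono hLint hgint hpw
      _ = 2 * ∫ ω, f1 (X ω) ∂ℙ + 2 * ∫ ω, f0 (X ω) ∂ℙ := by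
          rw [integral_add (hI1.const_mul 2) (hI0.const_mul 2),
            integral_const_mul, integral_const_mul]
      _ ≤ 2 * ((1/c) * ∫ ω, Z ω * f1 (X ω) ∂ℙ)
            + 2 * ((1/c) * ∫ ω, (1 - Z ω) * f0 (X ω) ∂ℙ) := by
          have := hE1; have := hE0; nlinarith
      _ = (2 / c) * (∫ ω, Z ω * f1 (X ω) ∂ℙ + ∫ ω, (1 - Z ω) * f0 (X ω) ∂ℙ) := by ring
      _ = (2 / c) * ∫ ω, (γ (Z ω) (X ω)) ^ 2 ∂ℙ := by rw [← hsum]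
  refine ⟨main, ?_⟩
  intro γ γ₀ hγ hγ₀ hIγ hIγ₀
  set δ : ℝ → 𝒳 → ℝ := fun z x => γ z x - γ₀ z x with hδdef
  have hδm : Measurable (fun p : ℝ × 𝒳 => δ p.1 p.2) := hγ.sub hγ₀
  have hδint : Integrable (fun ω => (δ (Z ω) (X ω)) ^ 2) ℙ := by
    refine Integrable.mono' ((hIγ.const_mul 2).add (hIγ₀.const_mul 2))
      (((hγ.comp (hZ.prodMk hX)).sub (hγ₀.comp (hZ.prodMk hX))).pow_const 2
        |>.aestronglyMeasurable) ?_
    filter_upwards with ω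
    rw [Real.norm_eq_abs, abs_of_nonneg (sq_nonneg _)]
    simp only [hδdef, Pi.add_apply]
    nlinarith [sq_nonneg (γ (Z ω) (X ω) + γ₀ (Z ω) (X ω))]
  have h := main δ hδm hδint
  have h1 : ∫ ω, ((γ 1 (X ω) - γ 0 (X ω)) - (γ₀ 1 (X ω) - γ₀ 0 (X ω))) ^ 2 ∂ℙ
      = ∫ ω, (δ 1 (X ω) - δ 0 (X ω)) ^ 2 ∂ℙ :=
    integral_congr_ae (Filter.Eventually.of_forall fun ω => by simp [hδdef]; ring)
  have h2 : ∫ ω, (γ (Z ω) (X ω) - γ₀ (Z ω) (X ω)) ^ 2 ∂ℙ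
      = ∫ ω, (δ (Z ω) (X ω)) ^ 2 ∂ℙ :=
    integral_congr_ae (Filter.Eventually.of_forall fun ω => by simp [hδdef])
  rw [h1, h2]
  exact h
end
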